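/- arXiv:2204.00406 — 5 statements merged into one kernel-verified Lean document; each statement's English description precedes it below -/
import Mathlib

section
/- Let h : ℝ^n → ℝ be strongly convex and twice continuously differentiable, and for each x ∈ ℝ^n let z*(x) denote the unique maximizer of z ↦ ⟨x,z⟩ − h(z). Then the convex conjugate h* : ℝ^n → ℝ is twice continuously differentiable and for all x ∈ ℝ^n: h*(x) = ⟨x, z*(x)⟩ − h(z*(x)), ∇h*(x) = z*(x), and ∇²h*(x) = [∇²h(z*(x))]^{-1}. -/
open scoped RealInnerProductSpace
open Set Filter Topology


section Aux
variable {E : Type*} [NormedAddCommGroup E] [InnerProductSpace ℝ E] [CompleteSpace E]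

theorem aux_grad_mono {f : E → ℝ} {g : E → E} (hconv : ConvexOn ℝ Set.univ f)
    (hg : ∀ p, HasGradientAt f (g p) p) (x y : E) :
    0 ≤ ⟪g x - g y, x - y⟫ := by
  have hline : ∀ t : ℝ, HasDerivAt (fun t : ℝ => t • (x - y) + y) (x - y) t := by
    intro t
    simpa using ((hasDerivAt_id t).smul_const (x - y)).add_const y
  have hq : ∀ t : ℝ, HasDerivAt (fun t : ℝ => f (t • (x - y) + y))
      ⟪g (t • (x - y) + y), x - y⟫ t := by
    intro t
    have hf := (hasGradientAt_iff_hasFDerivAt.mp (hg (t • (x - y) + y)))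
    have h7 := hf.comp_hasDerivAt t (hline t)
    simp [InnerProductSpace.toDual_apply_apply] at h7
    exact h7
  have hconvq : ConvexOn ℝ Set.univ (fun t : ℝ => f (t • (x - y) + y)) := by
    have := hconv.comp_affineMap (AffineMap.lineMap y x)
    rw [Set.preimage_univ] at this
    have he : (f ∘ ⇑(AffineMap.lineMap y x)) = fun t : ℝ => f (t • (x - y) + y) := by
      funext t; simp [Function.comp, AffineMap.lineMap_apply_module']
    rwa [he] at this
  rcases eq_or_ne x y with rfl | hxy
  · simp
  have hle1 : ⟪g y, x - y⟫ ≤ slope (fun t : ℝ => f (t • (x - y) + y)) 0 1 :=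
    hconvq.le_slope_of_hasDerivAt (mem_univ (0:ℝ)) (mem_univ (1:ℝ)) one_pos
      (by simpa using hq 0)
  have hle2 : slope (fun t : ℝ => f (t • (x - y) + y)) 0 1 ≤ ⟪g x, x - y⟫ :=
    hconvq.slope_le_of_hasDerivAt (mem_univ (0:ℝ)) (mem_univ (1:ℝ)) one_pos
      (by simpa using hq 1)
  have := hle1.trans hle2
  rw [inner_sub_left]
  linarith

theorem aux_grad_norm_sq (c : ℝ) (z : E) :
    HasGradientAt (fun z : E => c * ‖z‖ ^ 2) ((2 * c) • z) z := by
  have h1 : HasFDerivAt (fun z : E => ⟪z, z⟫)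
      ((fderivInnerCLM ℝ (z, z)).comp ((ContinuousLinearMap.id ℝ E).prod
        (ContinuousLinearMap.id ℝ E))) z := (hasFDerivAt_id z).inner ℝ (hasFDerivAt_id z)
  have h2 : HasFDerivAt (fun z : E => c * ⟪z, z⟫)
      (c • ((fderivInnerCLM ℝ (z, z)).comp ((ContinuousLinearMap.id ℝ E).prod
        (ContinuousLinearMap.id ℝ E)))) z := h1.const_mul c
  have heq : (fun z : E => c * ⟪z, z⟫) = fun z : E => c * ‖z‖ ^ 2 := by
    funext w; rw [real_inner_self_eq_norm_sq]
  rw [heq] at h2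
  rw [hasGradientAt_iff_hasFDerivAt]
  refine h2.congr_fderiv ?_
  ext v
  simp [InnerProductSpace.toDual_apply_apply, fderivInnerCLM_apply, real_inner_smul_left,
    real_inner_comm]
  ring

end Aux

/-- The convex conjugate`h*(x) = sup_z (⟪x,z⟫ − h z)` of a real-valued function on ℝⁿ. -/
noncomputable def conjFull {n : ℕ} (h : EuclideanSpace ℝ (Fin n) → ℝ) :
    EuclideanSpace ℝ (Fin n) → ℝ :=
  fun x => sSup (Set.range fun z => ⟪x, z⟫ - h z)

/-- **Smoothness of conjugates of strongly convex `C²` functions.**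
Let `h : ℝⁿ → ℝ` be strongly convex and twice continuously differentiable, and for each
`x` let `z*(x)` be the unique maximizer of `z ↦ ⟪x,z⟫ − h z`.  Then the conjugate `h*` is
twice continuously differentiable and for all `x`: `h*(x) = ⟪x, z*(x)⟫ − h (z*(x))`,
`∇h*(x) = z*(x)`, and `∇²h*(x) = [∇²h(z*(x))]⁻¹` (the Hessians, realized as the Fréchet
derivatives of the gradient maps, are mutually inverse linear maps). -/
theorem conjugate_of_C2_strongly_convex (n : ℕ) (h : EuclideanSpace ℝ (Fin n) → ℝ)
    (hC2 : ContDiff ℝ 2 h)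
    (hstrong : ∃ μ : ℝ, 0 < μ ∧ ConvexOn ℝ Set.univ (fun z => h z - μ / 2 * ‖z‖ ^ 2))
    (zstar : EuclideanSpace ℝ (Fin n) → EuclideanSpace ℝ (Fin n))
    (hzstar : ∀ x, IsMaxOn (fun z => ⟪x, z⟫ - h z) Set.univ (zstar x)) :
    ContDiff ℝ 2 (conjFull h) ∧
    (∀ x, conjFull h x = ⟪x, zstar x⟫ - h (zstar x)) ∧
    (∀ x, HasGradientAt (conjFull h) (zstar x) x) ∧
    (∀ x,
      (fderiv ℝ (gradient (conjFull h)) x).comp (fderiv ℝ (gradient h) (zstar x)) =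
        ContinuousLinearMap.id ℝ _ ∧
      (fderiv ℝ (gradient h) (zstar x)).comp (fderiv ℝ (gradient (conjFull h)) x) =
        ContinuousLinearMap.id ℝ _) := by
  obtain ⟨μ, hμ, hconv⟩ := hstrong
  have hdiff : Differentiable ℝ h := hC2.differentiable (by norm_num)
  set g : EuclideanSpace ℝ (Fin n) → EuclideanSpace ℝ (Fin n) := gradient h with hg_def
  -- the value formula
  have k2 : ∀ x, conjFull h x = ⟪x, zstar x⟫ - h (zstar x) := by
    intro x
    refine IsGreatest.csSup_eq ⟨⟨zstar x, rfl⟩, ?_⟩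
    rintro _ ⟨z, rfl⟩
    exact hzstar x (mem_univ z)
  -- g is C¹
  have hgC1 : ContDiff ℝ 1 g := by
    have h1 : ContDiff ℝ 1 (fderiv ℝ h) := hC2.fderiv_right (by norm_num)
    exact ((InnerProductSpace.toDual ℝ (EuclideanSpace ℝ (Fin n))).symm.toLinearIsometry.toContinuousLinearMap.contDiff).comp h1
  have hgd : Differentiable ℝ g := hgC1.differentiable one_ne_zero
  -- fderiv h in terms of g
  have hfd_h : ∀ z, fderiv ℝ h z = InnerProductSpace.toDual ℝ (EuclideanSpace ℝ (Fin n)) (g z) := by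
    intro z
    rw [hg_def]
    simp [gradient]
  -- strong monotonicity
  have hφ : ∀ p, HasGradientAt (fun z => h z - μ / 2 * ‖z‖ ^ 2) (g p - μ • p) p := by
    intro p
    have h1 : HasGradientAt h (g p) p := (hdiff p).hasGradientAt
    have h2 := aux_grad_norm_sq (μ / 2) p
    have hμ2 : (2 * (μ / 2)) = μ := by ring
    rw [hμ2] at h2
    rw [hasGradientAt_iff_hasFDerivAt] at h1 h2 ⊢
    have h3 := h1.sub h2
    rw [map_sub]
    exact h3
  have hmono : ∀ x y : EuclideanSpace ℝ (Fin n), μ * ‖x - y‖ ^ 2 ≤ ⟪g x - g y, x - y⟫ := by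
    intro x y
    have h0 := aux_grad_mono hconv hφ x y
    have he : (g x - μ • x) - (g y - μ • y) = (g x - g y) - μ • (x - y) := by
      rw [smul_sub]; abel
    rw [he, inner_sub_left, real_inner_smul_left, real_inner_self_eq_norm_sq] at h0
    linarith
  have hginj : Function.Injective g := by
    intro a b hab
    have hm := hmono a b
    rw [hab, sub_self, inner_zero_left] at hm
    have hs : ‖a - b‖ ^ 2 ≤ 0 := by nlinarith
    have : ‖a - b‖ = 0 := by nlinarith [norm_nonneg (a - b), sq_nonneg ‖a - b‖]
    rwa [norm_eq_zero, sub_eq_zero] at this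
  -- first-order condition
  have hfoc : ∀ x, g (zstar x) = x := by
    intro x
    have hder : HasFDerivAt (fun z => ⟪x, z⟫ - h z)
        ((innerSL ℝ x) - fderiv ℝ h (zstar x)) (zstar x) :=
      (innerSL ℝ x).hasFDerivAt.sub (hdiff (zstar x)).hasFDerivAt
    have hmax : IsLocalMax (fun z => ⟪x, z⟫ - h z) (zstar x) :=
      (hzstar x).isLocalMax univ_mem
    have h0 := hmax.hasFDerivAt_eq_zero hder
    rw [sub_eq_zero] at h0
    have h1 : fderiv ℝ h (zstar x) = innerSL ℝ x := h0.symm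
    have h2 : (InnerProductSpace.toDual ℝ (EuclideanSpace ℝ (Fin n))) x = innerSL ℝ x := by
      ext y; simp
    rw [hg_def]
    show (InnerProductSpace.toDual ℝ (EuclideanSpace ℝ (Fin n))).symm (fderiv ℝ h (zstar x)) = x
    rw [h1, ← h2, LinearIsometryEquiv.symm_apply_apply]
  -- Hessian positive definiteness and equivalences
  have hHeq : ∀ z : EuclideanSpace ℝ (Fin n), ∃ e : EuclideanSpace ℝ (Fin n) ≃L[ℝ] EuclideanSpace ℝ (Fin n), (e : EuclideanSpace ℝ (Fin n) →L[ℝ] EuclideanSpace ℝ (Fin n)) = fderiv ℝ g z := by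
    intro z
    have hbound : ∀ v, μ * ‖v‖ ^ 2 ≤ ⟪fderiv ℝ g z v, v⟫ := by
      intro v
      have hk : HasDerivAt (fun t : ℝ => g (z + t • v)) (fderiv ℝ g z v) 0 := by
        have hline : HasDerivAt (fun t : ℝ => z + t • v) v 0 := by
          simpa using ((hasDerivAt_id (0 : ℝ)).smul_const v).const_add z
        have h5 : HasFDerivAt g (fderiv ℝ g (z + (0 : ℝ) • v)) (z + (0 : ℝ) • v) :=
          (hgd (z + (0 : ℝ) • v)).hasFDerivAt
        have h6 := h5.comp_hasDerivAt 0 hline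
        simp at h6
        exact h6
      have htend : Tendsto (fun t : ℝ => ⟪slope (fun t : ℝ => g (z + t • v)) 0 t, v⟫)
          (𝓝[>] (0 : ℝ)) (𝓝 ⟪fderiv ℝ g z v, v⟫) := by
        have h1 := hasDerivAt_iff_tendsto_slope.mp hk
        have h2 : Continuous (fun w : EuclideanSpace ℝ (Fin n) => ⟪w, v⟫) :=
          continuous_id.inner continuous_const
        exact ((h2.continuousAt.tendsto.comp h1)).mono_left
          (nhdsWithin_mono _ fun t ht => ne_of_gt ht)
      refine ge_of_tendsto htend ?_
      filter_upwards [self_mem_nhdsWithin] with t ht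
      replace ht : (0 : ℝ) < t := ht
      have hmm := hmono (z + t • v) z
      rw [add_sub_cancel_left] at hmm
      rw [real_inner_smul_right, norm_smul] at hmm
      have hX : μ * t * ‖v‖ ^ 2 ≤ ⟪g (z + t • v) - g z, v⟫ := by
        have habs : ‖t‖ = t := by rw [Real.norm_eq_abs, abs_of_pos ht]
        rw [habs] at hmm
        nlinarith
      have hsl : slope (fun t : ℝ => g (z + t • v)) 0 t
          = t⁻¹ • (g (z + t • v) - g z) := by
        rw [slope_def_module]
        simp
      rw [hsl, real_inner_smul_left]
      rw [le_inv_mul_iff₀ ht]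
      nlinarith
    have hinj : Function.Injective (fderiv ℝ g z) := by
      intro a b hab
      have h1 := hbound (a - b)
      rw [map_sub, hab, sub_self, inner_zero_left] at h1
      have hs : ‖a - b‖ ^ 2 ≤ 0 := by nlinarith
      have : ‖a - b‖ = 0 := by nlinarith [norm_nonneg (a - b), sq_nonneg ‖a - b‖]
      rwa [norm_eq_zero, sub_eq_zero] at this
    have hbij : Function.Bijective ((fderiv ℝ g z).toLinearMap) :=
      ⟨hinj, LinearMap.injective_iff_surjective.mp hinj⟩
    refine ⟨(LinearEquiv.ofBijective (fderiv ℝ g z).toLinearMap hbij).toContinuousLinearEquiv,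
      ?_⟩
    ext v
    rfl
  choose Heq hHcoe using hHeq
  -- derivative and smoothness of zstar
  have hz : ∀ x, HasFDerivAt zstar ((Heq (zstar x)).symm : EuclideanSpace ℝ (Fin n) →L[ℝ] EuclideanSpace ℝ (Fin n)) x ∧
      ContDiffAt ℝ 1 zstar x := by
    intro x
    have hC1at : ContDiffAt ℝ 1 g (zstar x) := hgC1.contDiffAt
    have hsd : HasStrictFDerivAt g
        ((Heq (zstar x)) : EuclideanSpace ℝ (Fin n) →L[ℝ] EuclideanSpace ℝ (Fin n))
        (zstar x) := by
      rw [hHcoe]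
      exact hC1at.hasStrictFDerivAt one_ne_zero
    have hfa : g (zstar x) = x := hfoc x
    have hev : ∀ᶠ y in 𝓝 x, g (hsd.localInverse g (Heq (zstar x)) (zstar x) y) = y := by
      have := hsd.eventually_right_inverse; rwa [hfa] at this
    have heqev : zstar =ᶠ[𝓝 x] hsd.localInverse g (Heq (zstar x)) (zstar x) :=
      hev.mono fun y hy => hginj (by rw [hfoc y, hy])
    constructor
    · have h1 : HasFDerivAt (hsd.localInverse g (Heq (zstar x)) (zstar x))
          ((Heq (zstar x)).symm : EuclideanSpace ℝ (Fin n) →L[ℝ] EuclideanSpace ℝ (Fin n))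
          x := by
        have := hsd.to_localInverse.hasFDerivAt; rwa [hfa] at this
      exact h1.congr_of_eventuallyEq heqev
    · have h3 := hC1at.to_localInverse (f' := Heq (zstar x)) hsd.hasFDerivAt one_ne_zero
      rw [hfa] at h3
      exact (show ContDiffAt ℝ 1 (hsd.localInverse g (Heq (zstar x)) (zstar x)) x
        from h3).congr_of_eventuallyEq heqev
  -- gradient of the conjugate
  have hc : ∀ x, HasGradientAt (conjFull h) (zstar x) x := by
    intro x
    have hfun : conjFull h = fun y => ⟪y, zstar y⟫ - h (zstar y) := funext k2
    rw [hfun]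
    have hzx := (hz x).1
    have hA : HasFDerivAt (fun y => ⟪y, zstar y⟫)
        ((fderivInnerCLM ℝ (x, zstar x)).comp
          ((ContinuousLinearMap.id ℝ (EuclideanSpace ℝ (Fin n))).prod
            ((Heq (zstar x)).symm :
              EuclideanSpace ℝ (Fin n) →L[ℝ] EuclideanSpace ℝ (Fin n)))) x :=
      (hasFDerivAt_id x).inner ℝ hzx
    have hB : HasFDerivAt (fun y => h (zstar y))
        ((fderiv ℝ h (zstar x)).comp
          ((Heq (zstar x)).symm :
            EuclideanSpace ℝ (Fin n) →L[ℝ] EuclideanSpace ℝ (Fin n))) x :=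
      ((hdiff (zstar x)).hasFDerivAt).comp x hzx
    have hAB := hA.sub hB
    rw [hasGradientAt_iff_hasFDerivAt]
    refine hAB.congr_fderiv ?_
    ext v
    simp only [ContinuousLinearMap.sub_apply, ContinuousLinearMap.comp_apply,
      ContinuousLinearMap.prod_apply, ContinuousLinearMap.id_apply,
      fderivInnerCLM_apply, InnerProductSpace.toDual_apply_apply, hfd_h, hfoc]
    rw [real_inner_comm (zstar x) v]
    ring
  refine ⟨?_, k2, hc, ?_⟩
  · have hdiffc : Differentiable ℝ (conjFull h) := fun x => (hc x).differentiableAt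
    have hfderiv : fderiv ℝ (conjFull h)
        = fun x => (InnerProductSpace.toDual ℝ (EuclideanSpace ℝ (Fin n))) (zstar x) := by
      funext x
      exact (hasGradientAt_iff_hasFDerivAt.mp (hc x)).fderiv
    have hzsm : ContDiff ℝ 1 zstar := contDiff_iff_contDiffAt.mpr fun x => (hz x).2
    have hC1f : ContDiff ℝ 1 (fderiv ℝ (conjFull h)) := by
      rw [hfderiv]
      exact ((InnerProductSpace.toDual ℝ
        (EuclideanSpace ℝ (Fin n))).toLinearIsometry.toContinuousLinearMap.contDiff).comp hzsm
    rw [show (2 : WithTop ℕ∞) = 1 + 1 from rfl, contDiff_succ_iff_fderiv]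
    exact ⟨hdiffc, by simp, hC1f⟩
  · intro x
    have hgradc : gradient (conjFull h) = zstar := gradient_eq hc
    have h1 : fderiv ℝ (gradient (conjFull h)) x = ((Heq (zstar x)).symm : EuclideanSpace ℝ (Fin n) →L[ℝ] EuclideanSpace ℝ (Fin n)) := by
      rw [hgradc]; exact (hz x).1.fderiv
    have h2 : fderiv ℝ (gradient h) (zstar x) = (Heq (zstar x) : EuclideanSpace ℝ (Fin n) →L[ℝ] EuclideanSpace ℝ (Fin n)) :=
      (hHcoe (zstar x)).symm
    rw [h1, h2]
    exact ⟨(Heq (zstar x)).coe_symm_comp_coe, (Heq (zstar x)).coe_comp_coe_symm⟩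
end

section
/- For i = 1,…,N let f_i : ℝ^{m_i} → ℝ be convex and L_i-smooth and let A_i ∈ ℝ^{m_i×n}. Let φ : ℝ^n → (−∞,∞] be proper, closed, and convex, set f(x) := (1/N)∑_{i=1}^N f_i(A_i x), ψ := f + φ, and L̄ := max_{1≤i≤N} L_i‖A_i‖². Suppose x* ∈ argmin_x ψ(x) exists. Then for all x, x̃ ∈ dom(φ), with ζ_i := A_iᵀ(∇f_i(A_i x) − ∇f_i(A_i x̃)): (1/N)∑_{i=1}^N ‖ζ_i‖² ≤ 4L̄·(ψ(x) − ψ(x*) + ψ(x̃) − ψ(x*)). -/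
open scoped RealInnerProductSpace

section ZetaAux
open Set


variable {E : Type*} [NormedAddCommGroup E] [InnerProductSpace ℝ E] [CompleteSpace E]




/-- Derivative of `f` along a line, from the gradient. -/
lemma line_hasDerivAt {f : E → ℝ} {g : E → E} (hgrad : ∀ y, HasGradientAt f (g y) y)
    (z v : E) (t : ℝ) :
    HasDerivAt (fun s : ℝ => f (z + s • v)) ⟪g (z + t • v), v⟫ t := by
  have hl : HasDerivAt (fun s : ℝ => z + s • v) v t := by
    simpa using ((hasDerivAt_id t).smul_const v).const_add z
  have := (hgrad (z + t • v)).hasFDerivAt.comp_hasDerivAt t hl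
  simpa [InnerProductSpace.toDual_apply_apply, Function.comp_def] using this

/-- If difference quotients on `(0,1]` are at most `c`, the derivative at `0` is at most `c`. -/
lemma deriv_le_of_slope_le {h : ℝ → ℝ} {d c : ℝ} (hd : HasDerivAt h d 0)
    (hs : ∀ t ∈ Set.Ioc (0:ℝ) 1, h t - h 0 ≤ t * c) : d ≤ c := by
  have ht : Filter.Tendsto (slope h 0) (nhdsWithin 0 (Set.Ioi 0)) (nhds d) :=
    (hasDerivAt_iff_tendsto_slope.mp hd).mono_left
      (nhdsWithin_mono 0 (fun x hx => ne_of_gt hx))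
  refine le_of_tendsto ht ?_
  filter_upwards [Ioc_mem_nhdsGT (by norm_num : (0:ℝ) < 1)] with t htm
  rw [slope_def_field, sub_zero]
  have h0 : (0:ℝ) < t := htm.1
  rw [div_le_iff₀ h0]
  have := hs t htm
  linarith [this]

/-- If difference quotients on `(0,1]` are at least `c`, the derivative at `0` is at least `c`. -/
lemma le_deriv_of_slope_ge {h : ℝ → ℝ} {d c : ℝ} (hd : HasDerivAt h d 0)
    (hs : ∀ t ∈ Set.Ioc (0:ℝ) 1, t * c ≤ h t - h 0) : c ≤ d := by
  have ht : Filter.Tendsto (slope h 0) (nhdsWithin 0 (Set.Ioi 0)) (nhds d) :=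
    (hasDerivAt_iff_tendsto_slope.mp hd).mono_left
      (nhdsWithin_mono 0 (fun x hx => ne_of_gt hx))
  refine ge_of_tendsto ht ?_
  filter_upwards [Ioc_mem_nhdsGT (by norm_num : (0:ℝ) < 1)] with t htm
  rw [slope_def_field, sub_zero]
  have h0 : (0:ℝ) < t := htm.1
  rw [le_div_iff₀ h0]
  have := hs t htm
  linarith [this]

/-- First-order condition for a convex differentiable function. -/
lemma convex_first_order {f : E → ℝ} {g : E → E} (hgrad : ∀ y, HasGradientAt f (g y) y)
    (hconv : ConvexOn ℝ Set.univ f) (z u : E) :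
    f z + ⟪g z, u - z⟫ ≤ f u := by
  have hline := line_hasDerivAt hgrad z (u - z) 0
  simp only [zero_smul, add_zero] at hline
  have key : ⟪g z, u - z⟫ ≤ f u - f z := by
    refine deriv_le_of_slope_le hline ?_
    intro t ht
    have hco : z + t • (u - z) = (1 - t) • z + t • u := by
      rw [smul_sub]; module
    have hc := hconv.2 (Set.mem_univ z) (Set.mem_univ u)
      (by linarith [ht.1, ht.2] : (0:ℝ) ≤ 1 - t) (le_of_lt ht.1) (by ring)
    rw [← hco] at hc
    simp only [smul_eq_mul] at hc
    simp only [zero_smul, add_zero]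
    nlinarith [hc]
  linarith



lemma line_hasDerivAt' {f : E → ℝ} {g : E → E} (hgrad : ∀ y, HasGradientAt f (g y) y)
    (z v : E) (t : ℝ) :
    HasDerivAt (fun s : ℝ => f (z + s • v)) ⟪g (z + t • v), v⟫ t := by
  have hl : HasDerivAt (fun s : ℝ => z + s • v) v t := by
    simpa using ((hasDerivAt_id t).smul_const v).const_add z
  have := (hgrad (z + t • v)).hasFDerivAt.comp_hasDerivAt t hl
  simpa [InnerProductSpace.toDual_apply_apply, Function.comp_def] using this

/-- Descent lemma: quadratic upper bound for a function with Lipschitz gradient. -/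
lemma descent_lemma {f : E → ℝ} {g : E → E} (hgrad : ∀ y, HasGradientAt f (g y) y)
    {L : ℝ} (hL : 0 ≤ L) (hLip : ∀ y z, ‖g y - g z‖ ≤ L * ‖y - z‖) (z y : E) :
    f y ≤ f z + ⟪g z, y - z⟫ + L / 2 * ‖y - z‖ ^ 2 := by
  set v := y - z with hv
  set k : ℝ → ℝ := fun t => f (z + t • v) - t * ⟪g z, v⟫ - L / 2 * ‖v‖ ^ 2 * t ^ 2 with hk
  have hkd : ∀ t : ℝ, HasDerivAt k
      (⟪g (z + t • v), v⟫ - ⟪g z, v⟫ - L / 2 * ‖v‖ ^ 2 * (2 * t)) t := by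
    intro t
    have h1 := line_hasDerivAt' hgrad z v t
    have h2 : HasDerivAt (fun s : ℝ => s * ⟪g z, v⟫) ⟪g z, v⟫ t := by
      simpa using (hasDerivAt_id t).mul_const ⟪g z, v⟫
    have h3 : HasDerivAt (fun s : ℝ => L / 2 * ‖v‖ ^ 2 * s ^ 2)
        (L / 2 * ‖v‖ ^ 2 * (2 * t)) t := by
      simpa using (hasDerivAt_pow 2 t).const_mul (L / 2 * ‖v‖ ^ 2)
    exact (h1.sub h2).sub h3
  have hanti : AntitoneOn k (Icc 0 1) := by
    apply antitoneOn_of_deriv_nonpos (convex_Icc 0 1)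
    · exact (fun t _ => ((hkd t).differentiableAt).continuousAt.continuousWithinAt)
    · exact fun t _ => ((hkd t).differentiableAt).differentiableWithinAt
    · intro t ht
      rw [interior_Icc] at ht
      rw [(hkd t).deriv]
      have hb : ⟪g (z + t • v) - g z, v⟫ ≤ L * t * ‖v‖ ^ 2 := by
        calc ⟪g (z + t • v) - g z, v⟫ ≤ ‖g (z + t • v) - g z‖ * ‖v‖ :=
              real_inner_le_norm _ _
          _ ≤ (L * ‖(z + t • v) - z‖) * ‖v‖ := by
              apply mul_le_mul_of_nonneg_right (hLip _ _) (norm_nonneg _)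
          _ = L * t * ‖v‖ ^ 2 := by
              simp only [add_sub_cancel_left, norm_smul, Real.norm_eq_abs,
                abs_of_pos ht.1]
              ring
      rw [inner_sub_left] at hb
      nlinarith [hb]
  have h01 := hanti (left_mem_Icc.mpr (by norm_num)) (right_mem_Icc.mpr (by norm_num))
    (by norm_num : (0:ℝ) ≤ 1)
  simp only [hk, zero_smul, add_zero, one_smul, zero_pow, one_pow, zero_mul, mul_zero,
    sub_zero, mul_one, one_mul] at h01
  have hzy : z + v = y := by rw [hv]; abel
  rw [hzy] at h01
  linarith

/-- Cocoercivity-type bound for convex functions with Lipschitz gradient. -/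
lemma cocoercive {f : E → ℝ} {g : E → E} (hgrad : ∀ y, HasGradientAt f (g y) y)
    (hconv : ConvexOn ℝ Set.univ f)
    {L : ℝ} (hL : 0 < L) (hLip : ∀ y z, ‖g y - g z‖ ≤ L * ‖y - z‖) (z y : E) :
    ‖g y - g z‖ ^ 2 ≤ 2 * L * (f y - f z - ⟪g z, y - z⟫) := by
  set F : E → ℝ := fun w => f w - ⟪g z, w⟫ with hFdef
  set gF : E → E := fun w => g w - g z with hgFdef
  have hF : ∀ u, HasGradientAt F (gF u) u := by
    intro u
    have h1 : HasFDerivAt (fun w => ⟪g z, w⟫) (innerSL ℝ (g z) : E →L[ℝ] ℝ) u :=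
      (innerSL ℝ (g z)).hasFDerivAt
    have h2 := (hgrad u).hasFDerivAt.sub h1
    rw [hasGradientAt_iff_hasFDerivAt]
    exact h2.congr_fderiv (by ext w; simp [gF, inner_sub_left])
  have hFconv : ConvexOn ℝ Set.univ F := by
    refine ⟨convex_univ, fun p _ q _ a b ha hb hab => ?_⟩
    have := hconv.2 (Set.mem_univ p) (Set.mem_univ q) ha hb hab
    simp only [F, inner_add_right, real_inner_smul_right, smul_eq_mul] at *
    linarith
  have hFLip : ∀ p q, ‖gF p - gF q‖ ≤ L * ‖p - q‖ := by
    intro p q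
    simpa [gF, sub_sub_sub_cancel_right] using hLip p q
  -- first-order condition for F with gradient 0 at z
  have hfo : ∀ u, F z ≤ F u := by
    intro u
    have := convex_first_order hF hFconv z u
    simpa [gF] using this
  -- descent step from y
  set u := y - L⁻¹ • gF y with hu
  have hdes := descent_lemma hF hL.le hFLip y u
  have huy : u - y = -(L⁻¹ • gF y) := by rw [hu]; abel
  rw [huy] at hdes
  have hin : ⟪gF y, -(L⁻¹ • gF y)⟫ = -(L⁻¹ * ‖gF y‖ ^ 2) := by
    rw [inner_neg_right, real_inner_smul_right, real_inner_self_eq_norm_sq]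
  have hnr : ‖-(L⁻¹ • gF y)‖ ^ 2 = L⁻¹ ^ 2 * ‖gF y‖ ^ 2 := by
    rw [norm_neg, norm_smul, Real.norm_eq_abs, abs_of_pos (inv_pos.mpr hL), mul_pow]
  rw [hin, hnr] at hdes
  have hcomb : F z ≤ F y - L⁻¹ * ‖gF y‖ ^ 2 + L / 2 * (L⁻¹ ^ 2 * ‖gF y‖ ^ 2) :=
    le_trans (hfo u) (by linarith)
  have hLne : L ≠ 0 := ne_of_gt hL
  have hsimp : F y - L⁻¹ * ‖gF y‖ ^ 2 + L / 2 * (L⁻¹ ^ 2 * ‖gF y‖ ^ 2)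
      = F y - 1 / (2 * L) * ‖gF y‖ ^ 2 := by
    field_simp
    ring
  rw [hsimp] at hcomb
  have hFyz : F y - F z = f y - f z - ⟪g z, y - z⟫ := by
    simp only [F, inner_sub_right]
    ring
  have h2L : (0:ℝ) < 2 * L := by linarith
  have h4 : 2 * L * (1 / (2 * L) * ‖gF y‖ ^ 2) ≤ 2 * L * (F y - F z) :=
    mul_le_mul_of_nonneg_left (by linarith) h2L.le
  have h5 : 2 * L * (1 / (2 * L) * ‖gF y‖ ^ 2) = ‖gF y‖ ^ 2 := by
    field_simp
  rw [h5] at h4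
  show ‖gF y‖ ^ 2 ≤ 2 * L * (f y - f z - ⟪g z, y - z⟫)
  rw [← hFyz]
  exact h4

end ZetaAux

set_option maxHeartbeats 1600000 in
/-- **Bound on the variance-reduction differences via function values (convex case).**
For `i = 1,…,N` let `f_i : ℝ^{m_i} → ℝ` be convex and `L_i`-smooth (gradient `f' i`) and
`A_i : ℝⁿ → ℝ^{m_i}` linear.  Let `φ` be proper, closed and convex (domain `D`, real
values `φ` on `D`, closed epigraph), set `f x := (1/N) ∑_i f_i (A_i x)`, `ψ := f + φ` (on
`D`) and `L̄ := max_i L_i ‖A_i‖²`.  Suppose `x* ∈ argmin ψ` exists.  Then for all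
`x, x̃ ∈ dom φ`, with `ζ_i := A_iᵀ(∇f_i(A_i x) − ∇f_i(A_i x̃))`:
`(1/N) ∑_i ‖ζ_i‖² ≤ 4 L̄ (ψ x − ψ x* + ψ x̃ − ψ x*)`. -/
theorem zeta_bound_convex (n N : ℕ) (hN : 0 < N) (md : Fin N → ℕ)
    (A : ∀ i : Fin N, EuclideanSpace ℝ (Fin n) →L[ℝ] EuclideanSpace ℝ (Fin (md i)))
    (f : ∀ i : Fin N, EuclideanSpace ℝ (Fin (md i)) → ℝ)
    (f' : ∀ i : Fin N, EuclideanSpace ℝ (Fin (md i)) → EuclideanSpace ℝ (Fin (md i)))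
    (Li : Fin N → ℝ)
    (hgrad : ∀ i y, HasGradientAt (f i) (f' i y) y)
    (hLip : ∀ i y z, ‖f' i y - f' i z‖ ≤ Li i * ‖y - z‖)
    (hconv : ∀ i, ConvexOn ℝ Set.univ (f i))
    (D : Set (EuclideanSpace ℝ (Fin n))) (φ : EuclideanSpace ℝ (Fin n) → ℝ)
    (hD : D.Nonempty) (hφconv : ConvexOn ℝ D φ)
    (hφclosed : IsClosed {q : EuclideanSpace ℝ (Fin n) × ℝ | q.1 ∈ D ∧ φ q.1 ≤ q.2})
    (xstar : EuclideanSpace ℝ (Fin n)) (hxstarD : xstar ∈ D)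
    (hxstar : ∀ y ∈ D,
      (1 / (N : ℝ)) * (∑ i : Fin N, f i (A i xstar)) + φ xstar ≤
        (1 / (N : ℝ)) * (∑ i : Fin N, f i (A i y)) + φ y)
    (x xt : EuclideanSpace ℝ (Fin n)) (hx : x ∈ D) (hxt : xt ∈ D) :
    (1 / (N : ℝ)) * ∑ i : Fin N, ‖(A i).adjoint (f' i (A i x) - f' i (A i xt))‖ ^ 2 ≤
      4 * (⨆ j : Fin N, Li j * ‖A j‖ ^ 2) *
        (((1 / (N : ℝ)) * (∑ i : Fin N, f i (A i x)) + φ x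
            - ((1 / (N : ℝ)) * (∑ i : Fin N, f i (A i xstar)) + φ xstar))
          + ((1 / (N : ℝ)) * (∑ i : Fin N, f i (A i xt)) + φ xt
            - ((1 / (N : ℝ)) * (∑ i : Fin N, f i (A i xstar)) + φ xstar))) := by
  have hNpos : (0:ℝ) < (N:ℝ) := by exact_mod_cast hN
  set Lb : ℝ := ⨆ j : Fin N, Li j * ‖A j‖ ^ 2 with hLb
  set Bx : Fin N → ℝ := fun i =>
    f i (A i x) - f i (A i xstar) - ⟪f' i (A i xstar), A i x - A i xstar⟫ with hBx
  set Bt : Fin N → ℝ := fun i =>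
    f i (A i xt) - f i (A i xstar) - ⟪f' i (A i xstar), A i xt - A i xstar⟫ with hBt
  -- Bregman divergences are nonnegative
  have hBx0 : ∀ i, 0 ≤ Bx i := fun i => by
    have := convex_first_order (hgrad i) (hconv i) (A i xstar) (A i x)
    simp only [Bx]; linarith
  have hBt0 : ∀ i, 0 ≤ Bt i := fun i => by
    have := convex_first_order (hgrad i) (hconv i) (A i xstar) (A i xt)
    simp only [Bt]; linarith
  -- facts about Lb
  have hbdd : BddAbove (Set.range fun j : Fin N => Li j * ‖A j‖ ^ 2) :=
    (Set.finite_range _).bddAbove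
  have hterm : ∀ i, 0 ≤ Li i * ‖A i‖ ^ 2 := by
    intro i
    by_cases hA : A i = 0
    · simp [hA]
    · have he : ∃ u, A i u ≠ 0 := by
        by_contra h
        push_neg at h
        exact hA (ContinuousLinearMap.ext fun u => by simp [h u])
      obtain ⟨u, hu⟩ := he
      have hnorm : 0 < ‖A i u‖ := norm_pos_iff.mpr hu
      have h1 := hLip i (A i u) 0
      have h2 : (0:ℝ) ≤ ‖f' i (A i u) - f' i 0‖ := norm_nonneg _
      rw [sub_zero] at h1
      have hLi : 0 ≤ Li i := by nlinarith
      exact mul_nonneg hLi (sq_nonneg _)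
  have hle : ∀ i, Li i * ‖A i‖ ^ 2 ≤ Lb := fun i => le_ciSup hbdd i
  have hLb0 : 0 ≤ Lb := le_trans (hterm ⟨0, hN⟩) (hle ⟨0, hN⟩)
  -- the per-index key estimate
  have key : ∀ i, ‖(A i).adjoint (f' i (A i x) - f' i (A i xt))‖ ^ 2 ≤
      4 * Lb * (Bx i + Bt i) := by
    intro i
    set wx : EuclideanSpace ℝ (Fin (md i)) := f' i (A i x) - f' i (A i xstar) with hwx
    set wt : EuclideanSpace ℝ (Fin (md i)) := f' i (A i xt) - f' i (A i xstar) with hwt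
    have hzeq : f' i (A i x) - f' i (A i xt) = wx - wt := by rw [hwx, hwt]; abel
    have hRHS0 : 0 ≤ 4 * Lb * (Bx i + Bt i) := by
      have h1 := hBx0 i; have h2 := hBt0 i
      have : 0 ≤ Bx i + Bt i := by linarith
      have : (0:ℝ) ≤ 4 * Lb := by linarith
      nlinarith
    rcases le_or_gt (Li i) 0 with hLi | hLi
    · -- degenerate case: the gradient differences vanish
      have hwx0 : wx = 0 := by
        have h1 := hLip i (A i x) (A i xstar)
        have h2 : Li i * ‖A i x - A i xstar‖ ≤ 0 :=
          mul_nonpos_of_nonpos_of_nonneg hLi (norm_nonneg _)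
        rw [hwx]
        exact norm_le_zero_iff.mp (le_trans h1 h2)
      have hwt0 : wt = 0 := by
        have h1 := hLip i (A i xt) (A i xstar)
        have h2 : Li i * ‖A i xt - A i xstar‖ ≤ 0 :=
          mul_nonpos_of_nonpos_of_nonneg hLi (norm_nonneg _)
        rw [hwt]
        exact norm_le_zero_iff.mp (le_trans h1 h2)
      rw [hzeq, hwx0, hwt0]
      simpa using hRHS0
    · -- main case
      have hcx : ‖wx‖ ^ 2 ≤ 2 * Li i * Bx i := by
        have := cocoercive (hgrad i) (hconv i) hLi (hLip i) (A i xstar) (A i x)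
        simpa [Bx, hwx] using this
      have hct : ‖wt‖ ^ 2 ≤ 2 * Li i * Bt i := by
        have := cocoercive (hgrad i) (hconv i) hLi (hLip i) (A i xstar) (A i xt)
        simpa [Bt, hwt] using this
      have hz : ‖(A i).adjoint (wx - wt)‖ ≤ ‖A i‖ * ‖wx - wt‖ := by
        calc ‖(A i).adjoint (wx - wt)‖ ≤ ‖(A i).adjoint‖ * ‖wx - wt‖ :=
              ((A i).adjoint).le_opNorm _
          _ = ‖A i‖ * ‖wx - wt‖ := by
              rw [ContinuousLinearMap.adjoint.norm_map (A i)]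
      have hz2 : ‖(A i).adjoint (wx - wt)‖ ^ 2 ≤ ‖A i‖ ^ 2 * ‖wx - wt‖ ^ 2 := by
        rw [← mul_pow]
        exact pow_le_pow_left₀ (norm_nonneg _) hz 2
      have hsplit : ‖wx - wt‖ ^ 2 ≤ 2 * ‖wx‖ ^ 2 + 2 * ‖wt‖ ^ 2 := by
        have h1 := norm_sub_le wx wt
        nlinarith [norm_nonneg wx, norm_nonneg wt, norm_nonneg (wx - wt),
          sq_nonneg (‖wx‖ - ‖wt‖)]
      have hfin : ‖A i‖ ^ 2 * ‖wx - wt‖ ^ 2 ≤ 4 * Lb * (Bx i + Bt i) := by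
        have hA2 : (0:ℝ) ≤ ‖A i‖ ^ 2 := sq_nonneg _
        have hstep : ‖A i‖ ^ 2 * ‖wx - wt‖ ^ 2 ≤
            ‖A i‖ ^ 2 * (2 * (2 * Li i * Bx i) + 2 * (2 * Li i * Bt i)) := by
          apply mul_le_mul_of_nonneg_left _ hA2
          nlinarith [hcx, hct, hsplit]
        have heq : ‖A i‖ ^ 2 * (2 * (2 * Li i * Bx i) + 2 * (2 * Li i * Bt i))
            = 4 * (Li i * ‖A i‖ ^ 2) * (Bx i + Bt i) := by ring
        rw [heq] at hstep
        have hBsum : 0 ≤ Bx i + Bt i := by linarith [hBx0 i, hBt0 i]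
        have : 4 * (Li i * ‖A i‖ ^ 2) * (Bx i + Bt i) ≤ 4 * Lb * (Bx i + Bt i) := by
          have := hle i
          nlinarith
        linarith
      rw [hzeq]
      linarith
  -- optimality of xstar: directional derivative bound
  set v : EuclideanSpace ℝ (Fin n) := x - xstar with hv
  have hopt : φ xstar - φ x ≤
      (1 / (N:ℝ)) * ∑ i : Fin N, ⟪f' i (A i xstar), A i x - A i xstar⟫ := by
    set h : ℝ → ℝ := fun t => (1 / (N:ℝ)) * ∑ i : Fin N, f i (A i (xstar + t • v)) with hh
    have hder : HasDerivAt h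
        ((1 / (N:ℝ)) * ∑ i : Fin N, ⟪f' i (A i xstar), A i v⟫) 0 := by
      have hterm : ∀ i : Fin N, HasDerivAt (fun t : ℝ => f i (A i (xstar + t • v)))
          ⟪f' i (A i xstar), A i v⟫ 0 := by
        intro i
        have hfun : (fun t : ℝ => f i (A i (xstar + t • v)))
            = fun t : ℝ => f i (A i xstar + t • A i v) := by
          funext t
          simp [map_add, map_smul]
        have := line_hasDerivAt' (hgrad i) (A i xstar) (A i v) 0
        rw [hfun]
        simpa using this
      have hsum : HasDerivAt (fun t : ℝ => ∑ i : Fin N, f i (A i (xstar + t • v)))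
          (∑ i : Fin N, ⟪f' i (A i xstar), A i v⟫) 0 :=
        HasDerivAt.fun_sum fun i _ => hterm i
      exact hsum.const_mul _
    have hAv : ∀ i : Fin N, A i v = A i x - A i xstar := fun i => by
      rw [hv, map_sub]
    have hslope : ∀ t ∈ Set.Ioc (0:ℝ) 1, t * (φ xstar - φ x) ≤ h t - h 0 := by
      intro t ht
      have hco : xstar + t • v = (1 - t) • xstar + t • x := by
        rw [hv, smul_sub]; module
      have hmem : xstar + t • v ∈ D := by
        rw [hco]
        exact hφconv.1 hxstarD hx (by linarith [ht.1, ht.2]) ht.1.le (by ring)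
      have hψ := hxstar _ hmem
      have hφt : φ (xstar + t • v) ≤ (1 - t) * φ xstar + t * φ x := by
        have := hφconv.2 hxstarD hx (by linarith [ht.1, ht.2] : (0:ℝ) ≤ 1 - t)
          ht.1.le (by ring)
        rw [← hco] at this
        simpa using this
      have hh0 : h 0 = (1 / (N:ℝ)) * ∑ i : Fin N, f i (A i xstar) := by
        simp [hh]
      have hht : h t = (1 / (N:ℝ)) * ∑ i : Fin N, f i (A i (xstar + t • v)) := rfl
      rw [hh0, hht]
      linarith
    have := le_deriv_of_slope_ge hder hslope
    calc φ xstar - φ x ≤ (1 / (N:ℝ)) * ∑ i : Fin N, ⟪f' i (A i xstar), A i v⟫ := this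
      _ = (1 / (N:ℝ)) * ∑ i : Fin N, ⟪f' i (A i xstar), A i x - A i xstar⟫ := by
          congr 1
          exact Finset.sum_congr rfl fun i _ => by rw [hAv i]
  -- same for xt
  set vt : EuclideanSpace ℝ (Fin n) := xt - xstar with hvt
  have hoptt : φ xstar - φ xt ≤
      (1 / (N:ℝ)) * ∑ i : Fin N, ⟪f' i (A i xstar), A i xt - A i xstar⟫ := by
    set h : ℝ → ℝ := fun t => (1 / (N:ℝ)) * ∑ i : Fin N, f i (A i (xstar + t • vt)) with hh
    have hder : HasDerivAt h
        ((1 / (N:ℝ)) * ∑ i : Fin N, ⟪f' i (A i xstar), A i vt⟫) 0 := by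
      have hterm : ∀ i : Fin N, HasDerivAt (fun t : ℝ => f i (A i (xstar + t • vt)))
          ⟪f' i (A i xstar), A i vt⟫ 0 := by
        intro i
        have hfun : (fun t : ℝ => f i (A i (xstar + t • vt)))
            = fun t : ℝ => f i (A i xstar + t • A i vt) := by
          funext t
          simp [map_add, map_smul]
        have := line_hasDerivAt' (hgrad i) (A i xstar) (A i vt) 0
        rw [hfun]
        simpa using this
      have hsum : HasDerivAt (fun t : ℝ => ∑ i : Fin N, f i (A i (xstar + t • vt)))
          (∑ i : Fin N, ⟪f' i (A i xstar), A i vt⟫) 0 :=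
        HasDerivAt.fun_sum fun i _ => hterm i
      exact hsum.const_mul _
    have hAv : ∀ i : Fin N, A i vt = A i xt - A i xstar := fun i => by
      rw [hvt, map_sub]
    have hslope : ∀ t ∈ Set.Ioc (0:ℝ) 1, t * (φ xstar - φ xt) ≤ h t - h 0 := by
      intro t ht
      have hco : xstar + t • vt = (1 - t) • xstar + t • xt := by
        rw [hvt, smul_sub]; module
      have hmem : xstar + t • vt ∈ D := by
        rw [hco]
        exact hφconv.1 hxstarD hxt (by linarith [ht.1, ht.2]) ht.1.le (by ring)
      have hψ := hxstar _ hmem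
      have hφt : φ (xstar + t • vt) ≤ (1 - t) * φ xstar + t * φ xt := by
        have := hφconv.2 hxstarD hxt (by linarith [ht.1, ht.2] : (0:ℝ) ≤ 1 - t)
          ht.1.le (by ring)
        rw [← hco] at this
        simpa using this
      have hh0 : h 0 = (1 / (N:ℝ)) * ∑ i : Fin N, f i (A i xstar) := by
        simp [hh]
      have hht : h t = (1 / (N:ℝ)) * ∑ i : Fin N, f i (A i (xstar + t • vt)) := rfl
      rw [hh0, hht]
      linarith
    have := le_deriv_of_slope_ge hder hslope
    calc φ xstar - φ xt ≤ (1 / (N:ℝ)) * ∑ i : Fin N, ⟪f' i (A i xstar), A i vt⟫ := this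
      _ = (1 / (N:ℝ)) * ∑ i : Fin N, ⟪f' i (A i xstar), A i xt - A i xstar⟫ := by
          congr 1
          exact Finset.sum_congr rfl fun i _ => by rw [hAv i]
  -- sums of Bregman divergences are bounded by the suboptimality gaps
  have hsumBx : ∑ i : Fin N, Bx i = (∑ i : Fin N, f i (A i x))
      - (∑ i : Fin N, f i (A i xstar))
      - ∑ i : Fin N, ⟪f' i (A i xstar), A i x - A i xstar⟫ := by
    simp [Bx, Finset.sum_sub_distrib]
  have hsumBt : ∑ i : Fin N, Bt i = (∑ i : Fin N, f i (A i xt))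
      - (∑ i : Fin N, f i (A i xstar))
      - ∑ i : Fin N, ⟪f' i (A i xstar), A i xt - A i xstar⟫ := by
    simp [Bt, Finset.sum_sub_distrib]
  have hSx : (1 / (N:ℝ)) * ∑ i : Fin N, Bx i ≤
      ((1 / (N : ℝ)) * (∑ i : Fin N, f i (A i x)) + φ x
        - ((1 / (N : ℝ)) * (∑ i : Fin N, f i (A i xstar)) + φ xstar)) := by
    have e1 : (1 / (N:ℝ)) * ∑ i : Fin N, Bx i =
        (1 / (N:ℝ)) * (∑ i : Fin N, f i (A i x))
        - (1 / (N:ℝ)) * (∑ i : Fin N, f i (A i xstar))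
        - (1 / (N:ℝ)) * ∑ i : Fin N, ⟪f' i (A i xstar), A i x - A i xstar⟫ := by
      rw [hsumBx]; ring
    rw [e1]
    linarith [hopt]
  have hSt : (1 / (N:ℝ)) * ∑ i : Fin N, Bt i ≤
      ((1 / (N : ℝ)) * (∑ i : Fin N, f i (A i xt)) + φ xt
        - ((1 / (N : ℝ)) * (∑ i : Fin N, f i (A i xstar)) + φ xstar)) := by
    have e1 : (1 / (N:ℝ)) * ∑ i : Fin N, Bt i =
        (1 / (N:ℝ)) * (∑ i : Fin N, f i (A i xt))
        - (1 / (N:ℝ)) * (∑ i : Fin N, f i (A i xstar))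
        - (1 / (N:ℝ)) * ∑ i : Fin N, ⟪f' i (A i xstar), A i xt - A i xstar⟫ := by
      rw [hsumBt]; ring
    rw [e1]
    linarith [hoptt]
  -- put everything together
  have step1 : (1 / (N:ℝ)) * ∑ i : Fin N, ‖(A i).adjoint (f' i (A i x) - f' i (A i xt))‖ ^ 2
      ≤ (1 / (N:ℝ)) * ∑ i : Fin N, (4 * Lb * (Bx i + Bt i)) := by
    apply mul_le_mul_of_nonneg_left (Finset.sum_le_sum fun i _ => key i)
    positivity
  have step2 : (1 / (N:ℝ)) * ∑ i : Fin N, (4 * Lb * (Bx i + Bt i))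
      = 4 * Lb * ((1 / (N:ℝ)) * ∑ i : Fin N, Bx i + (1 / (N:ℝ)) * ∑ i : Fin N, Bt i) := by
    rw [← Finset.mul_sum, Finset.sum_add_distrib]
    ring
  have step3 : 4 * Lb * ((1 / (N:ℝ)) * ∑ i : Fin N, Bx i + (1 / (N:ℝ)) * ∑ i : Fin N, Bt i)
      ≤ 4 * Lb *
        (((1 / (N : ℝ)) * (∑ i : Fin N, f i (A i x)) + φ x
            - ((1 / (N : ℝ)) * (∑ i : Fin N, f i (A i xstar)) + φ xstar))
          + ((1 / (N : ℝ)) * (∑ i : Fin N, f i (A i xt)) + φ xt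
            - ((1 / (N : ℝ)) * (∑ i : Fin N, f i (A i xstar)) + φ xstar))) :=
    mul_le_mul_of_nonneg_left (add_le_add hSx hSt) (by linarith)
  calc (1 / (N:ℝ)) * ∑ i : Fin N, ‖(A i).adjoint (f' i (A i x) - f' i (A i xt))‖ ^ 2
      ≤ (1 / (N:ℝ)) * ∑ i : Fin N, (4 * Lb * (Bx i + Bt i)) := step1
    _ = 4 * Lb * ((1 / (N:ℝ)) * ∑ i : Fin N, Bx i + (1 / (N:ℝ)) * ∑ i : Fin N, Bt i) := step2
    _ ≤ _ := step3
end

section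
/- For i = 1,…,N let f_i : ℝ^{m_i} → ℝ be L_i-smooth, let A_i ∈ ℝ^{m_i×n}, set f(x) := (1/N)∑_{i=1}^N f_i(A_i x) and L̄ := max_{1≤i≤N} L_i‖A_i‖². Fix x, x̃ ∈ ℝ^n, let κ(1),…,κ(b) be i.i.d. indices uniform on {1,…,N}, and define u := (1/b)∑_{j=1}^b A_{κ(j)}ᵀ(∇f_{κ(j)}(A_{κ(j)} x) − ∇f_{κ(j)}(A_{κ(j)} x̃)) + ∇f(x̃). Then E‖u − ∇f(x)‖² ≤ (L̄²/b)‖x − x̃‖². -/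
open scoped RealInnerProductSpace
open Finset

lemma card_pi_ne {N b : ℕ} (j : Fin b) :
    Fintype.card ({ i : Fin b // i ≠ j } → Fin N) = N ^ (b - 1) := by
  rw [Fintype.card_fun, Fintype.card_fin]
  congr 1
  rw [Fintype.card_subtype_compl, Fintype.card_subtype_eq, Fintype.card_fin]

lemma sum_eval_one {N b : ℕ} (j : Fin b) (F : Fin N → ℝ) :
    ∑ ω : Fin b → Fin N, F (ω j) = (N : ℝ) ^ (b - 1) * ∑ a : Fin N, F a := by
  have e1 : ∑ ω : Fin b → Fin N, F (ω j)
      = ∑ p : Fin N × ({ i : Fin b // i ≠ j } → Fin N), F p.1 :=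
    Fintype.sum_equiv (Equiv.funSplitAt j (Fin N)) _ _ (fun ω => rfl)
  rw [e1, Fintype.sum_prod_type]
  simp [Finset.sum_const, card_univ, card_pi_ne, mul_comm]
  rw [Finset.sum_mul]

lemma sum_eval_two {N b : ℕ} {j k : Fin b} (hkj : k ≠ j) (G : Fin N → Fin N → ℝ)
    (hG : ∀ c, ∑ a : Fin N, G a c = 0) :
    ∑ ω : Fin b → Fin N, G (ω j) (ω k) = 0 := by
  have e1 : ∑ ω : Fin b → Fin N, G (ω j) (ω k)
      = ∑ p : Fin N × ({ i : Fin b // i ≠ j } → Fin N), G p.1 (p.2 ⟨k, hkj⟩) :=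
    Fintype.sum_equiv (Equiv.funSplitAt j (Fin N)) _ _ (fun ω => rfl)
  rw [e1, Fintype.sum_prod_type, Finset.sum_comm]
  simp [hG]

lemma key_variance {N b : ℕ} {V : Type*} [NormedAddCommGroup V] [InnerProductSpace ℝ V]
    (h : Fin N → V) (hsum : ∑ i : Fin N, h i = 0) :
    ∑ ω : Fin b → Fin N, ‖∑ j : Fin b, h (ω j)‖ ^ 2
      = (N : ℝ) ^ (b - 1) * b * ∑ i : Fin N, ‖h i‖ ^ 2 := by
  have expand : ∀ ω : Fin b → Fin N,
      ‖∑ j : Fin b, h (ω j)‖ ^ 2 = ∑ j : Fin b, ∑ k : Fin b, ⟪h (ω j), h (ω k)⟫ := by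
    intro ω
    rw [← real_inner_self_eq_norm_sq, sum_inner]
    exact Finset.sum_congr rfl fun j _ => inner_sum _ _ _
  simp only [expand]
  rw [Finset.sum_comm]
  have hterm : ∀ j : Fin b, ∑ ω : Fin b → Fin N, ∑ k : Fin b, ⟪h (ω j), h (ω k)⟫
      = (N : ℝ) ^ (b - 1) * ∑ i : Fin N, ‖h i‖ ^ 2 := by
    intro j
    rw [Finset.sum_comm]
    have hoff : ∀ k : Fin b, k ≠ j → ∑ ω : Fin b → Fin N, ⟪h (ω j), h (ω k)⟫ = 0 := by
      intro k hk
      refine sum_eval_two hk (fun a c => ⟪h a, h c⟫) (fun c => ?_)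
      rw [← sum_inner, hsum, inner_zero_left]
    have hdiag : ∑ ω : Fin b → Fin N, ⟪h (ω j), h (ω j)⟫
        = (N : ℝ) ^ (b - 1) * ∑ i : Fin N, ‖h i‖ ^ 2 := by
      rw [sum_eval_one j (fun a => ⟪h a, h a⟫)]
      simp [real_inner_self_eq_norm_sq]
    rw [Finset.sum_eq_single_of_mem j (Finset.mem_univ j)
      (fun k _ hk => hoff k hk), hdiag]
  rw [Finset.sum_congr rfl (fun j _ => hterm j), Finset.sum_const, card_univ,
    Fintype.card_fin, nsmul_eq_mul]
  ring


/-- Expectation (mean) of a random variable on the finite uniform probability space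
`Ω = Fin b → Fin N` of `b`-tuples of i.i.d. uniform indices. -/
noncomputable def uniformExp {N b : ℕ} {V : Type*} [AddCommGroup V] [Module ℝ V]
    (X : (Fin b → Fin N) → V) : V :=
  (1 / (N : ℝ) ^ b) • ∑ ω : Fin b → Fin N, X ω

/-- The full gradient `∇f(y) = (1/N) ∑_i A_iᵀ ∇f_i(A_i y)` of
`f(y) = (1/N) ∑_i f_i (A_i y)`. -/
noncomputable def fullGrad {n N : ℕ} (md : Fin N → ℕ)
    (A : ∀ i : Fin N, EuclideanSpace ℝ (Fin n) →L[ℝ] EuclideanSpace ℝ (Fin (md i)))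
    (f' : ∀ i : Fin N, EuclideanSpace ℝ (Fin (md i)) → EuclideanSpace ℝ (Fin (md i)))
    (y : EuclideanSpace ℝ (Fin n)) : EuclideanSpace ℝ (Fin n) :=
  (1 / (N : ℝ)) • ∑ i : Fin N, (A i).adjoint (f' i (A i y))

/-- The variance-reduced (SVRG-type) gradient estimator
`u(ω) = ∇f_S(x) − ∇f_S(x̃) + ∇f(x̃)` for the sampled tuple `S = (ω 1, …, ω b)`. -/
noncomputable def vrEstimator {n N b : ℕ} (md : Fin N → ℕ)
    (A : ∀ i : Fin N, EuclideanSpace ℝ (Fin n) →L[ℝ] EuclideanSpace ℝ (Fin (md i)))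
    (f' : ∀ i : Fin N, EuclideanSpace ℝ (Fin (md i)) → EuclideanSpace ℝ (Fin (md i)))
    (x xt : EuclideanSpace ℝ (Fin n)) (ω : Fin b → Fin N) : EuclideanSpace ℝ (Fin n) :=
  (1 / (b : ℝ)) • (∑ j : Fin b,
      (A (ω j)).adjoint (f' (ω j) (A (ω j) x) - f' (ω j) (A (ω j) xt)))
    + fullGrad md A f' xt

/-- **Variance bound for the SVRG estimator (smooth case).**
For `i = 1,…,N` let `f_i : ℝ^{m_i} → ℝ` be `L_i`-smooth (gradient `f' i`), let
`A_i : ℝⁿ → ℝ^{m_i}` be linear, `f(x) := (1/N)∑ f_i(A_i x)` and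
`L̄ := max_i L_i ‖A_i‖²`.  Fix `x, x̃ ∈ ℝⁿ`, let `κ(1),…,κ(b)` be i.i.d. indices uniform
on `{1,…,N}` and let `u := ∇f_S(x) − ∇f_S(x̃) + ∇f(x̃)`.  Then
`E‖u − ∇f(x)‖² ≤ (L̄²/b)‖x − x̃‖²`. -/
theorem vr_estimator_variance_smooth (n N b : ℕ) (hN : 0 < N) (hb : 0 < b)
    (md : Fin N → ℕ)
    (A : ∀ i : Fin N, EuclideanSpace ℝ (Fin n) →L[ℝ] EuclideanSpace ℝ (Fin (md i)))
    (f : ∀ i : Fin N, EuclideanSpace ℝ (Fin (md i)) → ℝ)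
    (f' : ∀ i : Fin N, EuclideanSpace ℝ (Fin (md i)) → EuclideanSpace ℝ (Fin (md i)))
    (Li : Fin N → ℝ)
    (hgrad : ∀ i y, HasGradientAt (f i) (f' i y) y)
    (hLip : ∀ i y z, ‖f' i y - f' i z‖ ≤ Li i * ‖y - z‖)
    (x xt : EuclideanSpace ℝ (Fin n)) :
    uniformExp (fun ω : Fin b → Fin N =>
        ‖vrEstimator md A f' x xt ω - fullGrad md A f' x‖ ^ 2) ≤
      ((⨆ j : Fin N, Li j * ‖A j‖ ^ 2) ^ 2 / (b : ℝ)) * ‖x - xt‖ ^ 2 := by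
  haveI : Nonempty (Fin N) := ⟨⟨0, hN⟩⟩
  have hNR : (0 : ℝ) < N := by exact_mod_cast hN
  have hbR : (0 : ℝ) < b := by exact_mod_cast hb
  set g : Fin N → EuclideanSpace ℝ (Fin n) :=
    fun i => (A i).adjoint (f' i (A i x) - f' i (A i xt)) with hg
  set μ : EuclideanSpace ℝ (Fin n) := (1 / (N : ℝ)) • ∑ i : Fin N, g i with hμ
  set h : Fin N → EuclideanSpace ℝ (Fin n) := fun i => g i - μ with hh
  have hsumg : ∑ i : Fin N, g i = (N : ℝ) • μ := by
    rw [hμ, smul_smul, mul_one_div, div_self hNR.ne', one_smul]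
  have hsum : ∑ i : Fin N, h i = 0 := by
    simp only [hh, Finset.sum_sub_distrib, Finset.sum_const, card_univ, Fintype.card_fin,
      hsumg, ← Nat.cast_smul_eq_nsmul ℝ, sub_self]
  -- pointwise bound on ‖g i‖
  have hbnd : ∀ i, ‖g i‖ ≤ (Li i * ‖A i‖ ^ 2) * ‖x - xt‖ ∧ 0 ≤ Li i * ‖A i‖ ^ 2 := by
    intro i
    rcases Nat.eq_zero_or_pos (md i) with hmd | hmd
    · have hS : Subsingleton (EuclideanSpace ℝ (Fin (md i))) := by
        rw [hmd]; infer_instance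
      have hA0 : A i = 0 := ContinuousLinearMap.ext fun y => Subsingleton.elim _ _
      have hg0 : g i = 0 := by
        rw [hg]
        have : f' i (A i x) - f' i (A i xt) = 0 := Subsingleton.elim _ _
        simp [this]
      rw [hg0, hA0]
      simp
    · have hLnn : 0 ≤ Li i := by
        have h1 := hLip i (EuclideanSpace.single (⟨0, hmd⟩ : Fin (md i)) (1 : ℝ)) 0
        rw [sub_zero, EuclideanSpace.norm_single, norm_one, mul_one] at h1
        exact le_trans (norm_nonneg _) h1
      constructor
      · calc ‖g i‖ ≤ ‖(ContinuousLinearMap.adjoint (A i) :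
              EuclideanSpace ℝ (Fin (md i)) →L[ℝ] EuclideanSpace ℝ (Fin n))‖
              * ‖f' i (A i x) - f' i (A i xt)‖ := (ContinuousLinearMap.le_opNorm _ _)
          _ = ‖A i‖ * ‖f' i (A i x) - f' i (A i xt)‖ := by
              rw [ContinuousLinearMap.adjoint.norm_map]
          _ ≤ ‖A i‖ * (Li i * ‖A i x - A i xt‖) :=
              mul_le_mul_of_nonneg_left (hLip i _ _) (norm_nonneg _)
          _ = ‖A i‖ * (Li i * ‖A i (x - xt)‖) := by rw [map_sub]
          _ ≤ ‖A i‖ * (Li i * (‖A i‖ * ‖x - xt‖)) := by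
              refine mul_le_mul_of_nonneg_left (mul_le_mul_of_nonneg_left ?_ hLnn)
                (norm_nonneg _)
              exact ContinuousLinearMap.le_opNorm _ _
          _ = (Li i * ‖A i‖ ^ 2) * ‖x - xt‖ := by ring
      · positivity
  set L : ℝ := ⨆ j : Fin N, Li j * ‖A j‖ ^ 2 with hL
  have hLb : ∀ i, Li i * ‖A i‖ ^ 2 ≤ L :=
    fun i => le_ciSup (f := fun j : Fin N => Li j * ‖A j‖ ^ 2)
      (Set.Finite.bddAbove (Set.finite_range _)) i
  have hL0 : 0 ≤ L := le_trans (hbnd ⟨0, hN⟩).2 (hLb ⟨0, hN⟩)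
  have hgL : ∀ i, ‖g i‖ ≤ L * ‖x - xt‖ := fun i =>
    le_trans (hbnd i).1 (mul_le_mul_of_nonneg_right (hLb i) (norm_nonneg _))
  -- representation of the estimator error
  have hrepr : ∀ ω : Fin b → Fin N,
      vrEstimator md A f' x xt ω - fullGrad md A f' x
        = (1 / (b : ℝ)) • ∑ j : Fin b, h (ω j) := by
    intro ω
    simp only [vrEstimator, fullGrad, hh, hμ, hg, map_sub, Finset.sum_sub_distrib,
      smul_sub, Finset.sum_const, card_univ, Fintype.card_fin,
      ← Nat.cast_smul_eq_nsmul ℝ]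
    match_scalars <;> field_simp
  -- compute the expectation
  have hexp : uniformExp (fun ω : Fin b → Fin N =>
        ‖vrEstimator md A f' x xt ω - fullGrad md A f' x‖ ^ 2)
      = (1 / ((N : ℝ) * b)) * ∑ i : Fin N, ‖h i‖ ^ 2 := by
    unfold uniformExp
    rw [smul_eq_mul]
    have hpt : ∀ ω : Fin b → Fin N,
        ‖vrEstimator md A f' x xt ω - fullGrad md A f' x‖ ^ 2
          = (1 / (b : ℝ)) ^ 2 * ‖∑ j : Fin b, h (ω j)‖ ^ 2 := by
      intro ω
      rw [hrepr ω, norm_smul, mul_pow, Real.norm_eq_abs, abs_of_nonneg (by positivity)]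
    rw [Finset.sum_congr rfl (fun ω _ => hpt ω), ← Finset.mul_sum, key_variance h hsum]
    have hNb : (N : ℝ) ^ b = (N : ℝ) ^ (b - 1) * N := by
      rw [← pow_succ, Nat.sub_add_cancel hb]
    rw [hNb]
    have hNp : (0:ℝ) < (N : ℝ) ^ (b - 1) := by positivity
    field_simp
  rw [hexp]
  -- bound ∑ ‖h i‖² by ∑ ‖g i‖²
  have hvar : ∑ i : Fin N, ‖h i‖ ^ 2 ≤ ∑ i : Fin N, ‖g i‖ ^ 2 := by
    have hid : ∑ i : Fin N, ‖h i‖ ^ 2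
        = ∑ i : Fin N, ‖g i‖ ^ 2 - (N : ℝ) * ‖μ‖ ^ 2 := by
      simp only [hh, norm_sub_sq_real]
      rw [Finset.sum_add_distrib, Finset.sum_sub_distrib, ← Finset.mul_sum, ← sum_inner,
        hsumg, real_inner_smul_left, real_inner_self_eq_norm_sq, Finset.sum_const,
        card_univ, Fintype.card_fin, nsmul_eq_mul]
      ring
    rw [hid]
    have : (0:ℝ) ≤ (N : ℝ) * ‖μ‖ ^ 2 := by positivity
    linarith
  have hgsum : ∑ i : Fin N, ‖g i‖ ^ 2 ≤ (N : ℝ) * (L * ‖x - xt‖) ^ 2 := by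
    calc ∑ i : Fin N, ‖g i‖ ^ 2 ≤ ∑ _i : Fin N, (L * ‖x - xt‖) ^ 2 :=
          Finset.sum_le_sum fun i _ => pow_le_pow_left₀ (norm_nonneg _) (hgL i) 2
      _ = (N : ℝ) * (L * ‖x - xt‖) ^ 2 := by
          rw [Finset.sum_const, card_univ, Fintype.card_fin, nsmul_eq_mul]
  calc (1 / ((N : ℝ) * b)) * ∑ i : Fin N, ‖h i‖ ^ 2
      ≤ (1 / ((N : ℝ) * b)) * ((N : ℝ) * (L * ‖x - xt‖) ^ 2) := by
        refine mul_le_mul_of_nonneg_left (le_trans hvar hgsum) (by positivity)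
    _ = (L ^ 2 / (b : ℝ)) * ‖x - xt‖ ^ 2 := by
        field_simp
end

section
/- For i = 1,…,N let f_i : ℝ^{m_i} → ℝ be convex and L_i-smooth, let A_i ∈ ℝ^{m_i×n}, let φ : ℝ^n → (−∞,∞] be proper, closed, and convex, set f(x) := (1/N)∑_{i=1}^N f_i(A_i x), ψ := f + φ, and L̄ := max_{1≤i≤N} L_i‖A_i‖². Suppose x* ∈ argmin_x ψ(x) exists. Fix x, x̃ ∈ dom(φ), let κ(1),…,κ(b) be i.i.d. indices uniform on {1,…,N}, and define u := (1/b)∑_{j=1}^b A_{κ(j)}ᵀ(∇f_{κ(j)}(A_{κ(j)} x) − ∇f_{κ(j)}(A_{κ(j)} x̃)) + ∇f(x̃). Then E‖u − ∇f(x)‖² ≤ (4L̄/b)·(ψ(x) − ψ(x*) + ψ(x̃) − ψ(x*)). -/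
open scoped RealInnerProductSpace

section Helpers

variable {H : Type*} [NormedAddCommGroup H] [InnerProductSpace ℝ H]

lemma lineDeriv_aux [CompleteSpace H] (f : H → ℝ) (g : H → H)
    (hf : ∀ y, HasGradientAt f (g y) y) (a v : H) (t : ℝ) :
    HasDerivAt (fun s : ℝ => f (a + s • v)) ⟪g (a + t • v), v⟫ t := by
  have h1 : HasDerivAt (fun s : ℝ => a + s • v) v t := by
    simpa using ((hasDerivAt_id t).smul_const v).const_add a
  have h2 := ((hasGradientAt_iff_hasFDerivAt.1 (hf (a + t • v))).comp_hasDerivAt t h1)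
  exact h2

lemma deriv_le_of_slope (φt : ℝ → ℝ) (d c : ℝ) (h : HasDerivAt φt d 0)
    (hb : ∀ t ∈ Set.Ioc (0:ℝ) 1, (φt t - φt 0) / t ≤ c) : d ≤ c := by
  have h2 := hasDerivAt_iff_tendsto_slope.1 h
  have h3 : Filter.Tendsto (slope φt 0) (nhdsWithin 0 (Set.Ioi 0)) (nhds d) :=
    h2.mono_left (nhdsWithin_mono 0 (fun x hx => by
      simp only [Set.mem_compl_iff, Set.mem_singleton_iff]
      exact ne_of_gt hx))
  refine le_of_tendsto h3 ?_
  filter_upwards [Ioc_mem_nhdsGT_of_mem (Set.left_mem_Ico.2 one_pos)] with t ht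
  simpa [slope_def_field] using hb t ht

lemma le_deriv_of_slope (φt : ℝ → ℝ) (d c : ℝ) (h : HasDerivAt φt d 0)
    (hb : ∀ t ∈ Set.Ioc (0:ℝ) 1, c ≤ (φt t - φt 0) / t) : c ≤ d := by
  have h2 := hasDerivAt_iff_tendsto_slope.1 h
  have h3 : Filter.Tendsto (slope φt 0) (nhdsWithin 0 (Set.Ioi 0)) (nhds d) :=
    h2.mono_left (nhdsWithin_mono 0 (fun x hx => by
      simp only [Set.mem_compl_iff, Set.mem_singleton_iff]
      exact ne_of_gt hx))
  refine ge_of_tendsto h3 ?_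
  filter_upwards [Ioc_mem_nhdsGT_of_mem (Set.left_mem_Ico.2 one_pos)] with t ht
  simpa [slope_def_field] using hb t ht

lemma first_order_aux [CompleteSpace H] (f : H → ℝ) (g : H → H)
    (hf : ∀ y, HasGradientAt f (g y) y)
    (hconv : ConvexOn ℝ Set.univ f) (a b : H) :
    f a + ⟪g a, b - a⟫ ≤ f b := by
  have hd : HasDerivAt (fun s : ℝ => f (a + s • (b - a))) ⟪g a, b - a⟫ 0 := by
    have := lineDeriv_aux f g hf a (b - a) 0
    simpa using this
  have key : ⟪g a, b - a⟫ ≤ f b - f a := by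
    refine deriv_le_of_slope _ _ _ hd ?_
    intro t ht
    have h1 : a + t • (b - a) = (1 - t) • a + t • b := by
      simp [sub_smul, smul_sub]; abel
    have h2 : f (a + t • (b - a)) ≤ (1 - t) * f a + t * f b := by
      rw [h1]
      exact hconv.2 (Set.mem_univ a) (Set.mem_univ b) (by linarith [ht.2, ht.1]) ht.1.le
        (by ring)
    have h0 : f (a + (0:ℝ) • (b - a)) = f a := by simp
    rw [div_le_iff₀ ht.1]
    rw [h0]
    nlinarith [ht.1]
  linarith

lemma descent_aux [CompleteSpace H] (f : H → ℝ) (g : H → H) (L : ℝ)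
    (hf : ∀ y, HasGradientAt f (g y) y)
    (hLip : ∀ y z, ‖g y - g z‖ ≤ L * ‖y - z‖) (a b : H) :
    f b ≤ f a + ⟪g a, b - a⟫ + L / 2 * ‖b - a‖ ^ 2 := by
  set v := b - a with hv
  set d0 : ℝ := ⟪g a, v⟫ with hd0
  set C : ℝ := L * ‖v‖ ^ 2 with hC
  set q : ℝ → ℝ := fun t => f (a + t • v) - t * d0 - C / 2 * t ^ 2 with hq
  have hqd : ∀ t : ℝ, HasDerivAt q (⟪g (a + t • v), v⟫ - d0 - C * t) t := by
    intro t
    have h1 := lineDeriv_aux f g hf a v t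
    have h2 : HasDerivAt (fun s : ℝ => s * d0) d0 t := by
      simpa using (hasDerivAt_id t).mul_const d0
    have h3 : HasDerivAt (fun s : ℝ => C / 2 * s ^ 2) (C * t) t := by
      have := ((hasDerivAt_pow 2 t).const_mul (C / 2))
      refine this.congr_deriv ?_
      ring
    exact (h1.sub h2).sub h3
  have hanti : AntitoneOn q (Set.Icc 0 1) := by
    apply antitoneOn_of_deriv_nonpos (convex_Icc 0 1)
    · exact fun t _ => ((hqd t).continuousAt).continuousWithinAt
    · exact fun t _ => ((hqd t).differentiableAt).differentiableWithinAt
    · intro t ht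
      rw [interior_Icc] at ht
      rw [(hqd t).deriv]
      have hip : ⟪g (a + t • v) - g a, v⟫ ≤ C * t := by
        calc ⟪g (a + t • v) - g a, v⟫ ≤ ‖g (a + t • v) - g a‖ * ‖v‖ :=
              real_inner_le_norm _ _
          _ ≤ (L * ‖(a + t • v) - a‖) * ‖v‖ := by
              have := hLip (a + t • v) a
              exact mul_le_mul_of_nonneg_right this (norm_nonneg v)
          _ = C * t := by
              have : ‖(a + t • v) - a‖ = t * ‖v‖ := by
                simp [norm_smul, abs_of_pos ht.1]
              rw [this, hC]
              try ring
      have : ⟪g (a + t • v), v⟫ - d0 = ⟪g (a + t • v) - g a, v⟫ := by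
        rw [inner_sub_left]
        try rfl
      linarith
  have h01 := hanti (Set.mem_Icc.2 ⟨le_refl 0, zero_le_one⟩)
    (Set.mem_Icc.2 ⟨zero_le_one, le_refl 1⟩) zero_le_one
  have hq0 : q 0 = f a := by simp [hq]
  have hq1 : q 1 = f b - d0 - C / 2 := by simp [hq, hv]
  rw [hq0, hq1] at h01
  have : L / 2 * ‖b - a‖ ^ 2 = C / 2 := by rw [hC, hv]; ring
  linarith

lemma cocoercive_aux [CompleteSpace H] (f : H → ℝ) (g : H → H) (L : ℝ)
    (hf : ∀ y, HasGradientAt f (g y) y) (hLip : ∀ y z, ‖g y - g z‖ ≤ L * ‖y - z‖)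
    (hconv : ConvexOn ℝ Set.univ f) (y z : H) :
    ‖g y - g z‖ ^ 2 ≤ 2 * L * (f y - f z - ⟪g z, y - z⟫) := by
  rcases eq_or_ne y z with rfl | hyz
  · simp
  have hyz' : (0:ℝ) < ‖y - z‖ := by
    rw [norm_pos_iff]; exact sub_ne_zero.2 hyz
  have hL0 : 0 ≤ L := by
    have h1 := hLip y z
    nlinarith [norm_nonneg (g y - g z)]
  rcases hL0.eq_or_lt with hL | hL
  · have h1 := hLip y z
    rw [← hL] at h1
    have h2 : ‖g y - g z‖ = 0 := le_antisymm (by simpa using h1) (norm_nonneg _)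
    rw [h2, ← hL]
    simp
  · set G : H := g y - g z with hG
    set w : H := y - L⁻¹ • G with hw
    have h1 : f z + ⟪g z, w - z⟫ ≤ f w := first_order_aux f g hf hconv z w
    have h2 : f w ≤ f y + ⟪g y, w - y⟫ + L / 2 * ‖w - y‖ ^ 2 :=
      descent_aux f g L hf hLip y w
    have e1 : w - y = -(L⁻¹ • G) := by rw [hw]; abel
    have e2 : w - z = (y - z) - L⁻¹ • G := by rw [hw]; abel
    have e3 : ⟪g y, w - y⟫ = -(L⁻¹ * ⟪g y, G⟫) := by
      rw [e1, inner_neg_right, real_inner_smul_right]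
    have e4 : ⟪g z, w - z⟫ = ⟪g z, y - z⟫ - L⁻¹ * ⟪g z, G⟫ := by
      rw [e2, inner_sub_right, real_inner_smul_right]
    have e5 : ‖w - y‖ ^ 2 = L⁻¹ ^ 2 * ‖G‖ ^ 2 := by
      rw [e1, norm_neg, norm_smul]
      rw [Real.norm_eq_abs, abs_of_pos (inv_pos.2 hL)]
      ring
    have e6 : ⟪g y, G⟫ - ⟪g z, G⟫ = ‖G‖ ^ 2 := by
      rw [← inner_sub_left, ← hG, real_inner_self_eq_norm_sq]
    rw [e3, e5] at h2
    rw [e4] at h1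
    have hLne : L ≠ 0 := ne_of_gt hL
    have e7 : L⁻¹ * ⟪g y, G⟫ - L⁻¹ * ⟪g z, G⟫ = L⁻¹ * ‖G‖ ^ 2 := by
      rw [← mul_sub, e6]
    have simp1 : L / 2 * (L⁻¹ ^ 2 * ‖G‖ ^ 2) = L⁻¹ / 2 * ‖G‖ ^ 2 := by
      field_simp
    have key : L⁻¹ / 2 * ‖G‖ ^ 2 ≤ f y - f z - ⟪g z, y - z⟫ := by linarith
    have h3 := mul_le_mul_of_nonneg_left key (by positivity : (0:ℝ) ≤ 2 * L)
    have simp2 : 2 * L * (L⁻¹ / 2 * ‖G‖ ^ 2) = ‖G‖ ^ 2 := by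
      field_simp
    linarith

lemma sum_tuple_norm_sq {N : ℕ} (c : Fin N → H) (hc : ∑ i, c i = 0) :
    ∀ b : ℕ, (N:ℝ) * ∑ ω : Fin b → Fin N, ‖∑ j, c (ω j)‖ ^ 2
      = (b:ℝ) * (N:ℝ)^b * ∑ i, ‖c i‖ ^ 2 := by
  intro b
  induction b with
  | zero => simp
  | succ b ih =>
    have step : ∑ ω : Fin (b+1) → Fin N, ‖∑ j, c (ω j)‖ ^ 2
        = (N:ℝ)^b * ∑ i, ‖c i‖ ^ 2
          + (N:ℝ) * ∑ ω : Fin b → Fin N, ‖∑ j, c (ω j)‖ ^ 2 := by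
      calc ∑ ω : Fin (b+1) → Fin N, ‖∑ j, c (ω j)‖ ^ 2
          = ∑ p : Fin N × (Fin b → Fin N),
              ‖∑ j, c ((Fin.consEquiv (fun _ => Fin N)) p j)‖ ^ 2 :=
            ((Fin.consEquiv (fun _ => Fin N)).sum_comp _).symm
        _ = ∑ v : Fin N, ∑ ρ : Fin b → Fin N,
              ‖c v + ∑ j : Fin b, c (ρ j)‖ ^ 2 := by
            rw [Fintype.sum_prod_type]
            refine Finset.sum_congr rfl fun v _ => Finset.sum_congr rfl fun ρ _ => ?_
            congr 1
            rw [Fin.sum_univ_succ]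
            simp [Fin.consEquiv]
        _ = ∑ v : Fin N, ∑ ρ : Fin b → Fin N,
              (‖c v‖ ^ 2 + 2 * ⟪c v, ∑ j : Fin b, c (ρ j)⟫
                + ‖∑ j : Fin b, c (ρ j)‖ ^ 2) := by
            simp only [norm_add_sq_real]
        _ = (N:ℝ)^b * ∑ i, ‖c i‖ ^ 2
              + (N:ℝ) * ∑ ω : Fin b → Fin N, ‖∑ j, c (ω j)‖ ^ 2 := by
            simp only [Finset.sum_add_distrib]
            have hcard : (Finset.univ : Finset (Fin b → Fin N)).card = N ^ b := by
              simp [Finset.card_univ]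
            have t1 : ∑ v : Fin N, ∑ _ρ : Fin b → Fin N, ‖c v‖ ^ 2
                = (N:ℝ)^b * ∑ i, ‖c i‖ ^ 2 := by
              simp only [Finset.sum_const, hcard, nsmul_eq_mul]
              rw [← Finset.mul_sum]
              push_cast
              ring
            have t2 : ∑ v : Fin N, ∑ ρ : Fin b → Fin N,
                2 * ⟪c v, ∑ j : Fin b, c (ρ j)⟫ = 0 := by
              have h1 : ∀ v : Fin N, ∑ ρ : Fin b → Fin N,
                  2 * ⟪c v, ∑ j : Fin b, c (ρ j)⟫
                  = 2 * ⟪c v, ∑ ρ : Fin b → Fin N, ∑ j : Fin b, c (ρ j)⟫ := by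
                intro v
                rw [inner_sum, Finset.mul_sum]
              simp only [h1]
              have h2 : ∑ v : Fin N,
                  2 * ⟪c v, ∑ ρ : Fin b → Fin N, ∑ j : Fin b, c (ρ j)⟫
                  = 2 * ⟪∑ v, c v, ∑ ρ : Fin b → Fin N, ∑ j : Fin b, c (ρ j)⟫ := by
                rw [sum_inner, Finset.mul_sum]
              rw [h2, hc]
              simp
            have t3 : ∑ _v : Fin N, ∑ ρ : Fin b → Fin N, ‖∑ j : Fin b, c (ρ j)‖ ^ 2
                = (N:ℝ) * ∑ ω : Fin b → Fin N, ‖∑ j, c (ω j)‖ ^ 2 := by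
              rw [Finset.sum_const, Finset.card_univ, Fintype.card_fin, nsmul_eq_mul]
            rw [t1, t2, t3]
            ring
    set V : ℝ := ∑ i, ‖c i‖ ^ 2 with hV
    set T : ℝ := ∑ ω : Fin b → Fin N, ‖∑ j, c (ω j)‖ ^ 2 with hT
    rw [step]
    push_cast [pow_succ]
    linear_combination (N:ℝ) * ih

end Helpers

lemma fullGrad_lineDeriv {n N : ℕ} (hN : 0 < N) (md : Fin N → ℕ)
    (A : ∀ i : Fin N, EuclideanSpace ℝ (Fin n) →L[ℝ] EuclideanSpace ℝ (Fin (md i)))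
    (f : ∀ i : Fin N, EuclideanSpace ℝ (Fin (md i)) → ℝ)
    (f' : ∀ i : Fin N, EuclideanSpace ℝ (Fin (md i)) → EuclideanSpace ℝ (Fin (md i)))
    (hgrad : ∀ i y, HasGradientAt (f i) (f' i y) y)
    (p w : EuclideanSpace ℝ (Fin n)) :
    HasDerivAt (fun t : ℝ => (1 / (N:ℝ)) * ∑ i : Fin N, f i (A i (p + t • w)))
      ⟪fullGrad md A f' p, w⟫ 0 := by
  have h1 : ∀ i : Fin N, HasDerivAt (fun t : ℝ => f i (A i (p + t • w)))
      ⟪f' i (A i p), A i w⟫ 0 := by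
    intro i
    have heq : (fun t : ℝ => f i (A i (p + t • w)))
        = fun s : ℝ => f i (A i p + s • A i w) := by
      funext t
      rw [map_add, map_smul]
    rw [heq]
    have := lineDeriv_aux (f i) (f' i) (hgrad i) (A i p) (A i w) 0
    simpa using this
  have h2 : HasDerivAt (fun t : ℝ => ∑ i : Fin N, f i (A i (p + t • w)))
      (∑ i : Fin N, ⟪f' i (A i p), A i w⟫) 0 :=
    HasDerivAt.fun_sum (fun i _ => h1 i)
  have h3 := h2.const_mul (1 / (N:ℝ))
  have e : ⟪fullGrad md A f' p, w⟫
      = (1 / (N:ℝ)) * ∑ i : Fin N, ⟪f' i (A i p), A i w⟫ := by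
    rw [fullGrad, real_inner_smul_left, sum_inner]
    congr 1
    exact Finset.sum_congr rfl fun i _ => (A i).adjoint_inner_left _ _
  rw [e]
  exact h3

lemma optimality_aux {n N : ℕ} (hN : 0 < N) (md : Fin N → ℕ)
    (A : ∀ i : Fin N, EuclideanSpace ℝ (Fin n) →L[ℝ] EuclideanSpace ℝ (Fin (md i)))
    (f : ∀ i : Fin N, EuclideanSpace ℝ (Fin (md i)) → ℝ)
    (f' : ∀ i : Fin N, EuclideanSpace ℝ (Fin (md i)) → EuclideanSpace ℝ (Fin (md i)))
    (hgrad : ∀ i y, HasGradientAt (f i) (f' i y) y)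
    (D : Set (EuclideanSpace ℝ (Fin n))) (φ : EuclideanSpace ℝ (Fin n) → ℝ)
    (hφconv : ConvexOn ℝ D φ)
    (xstar : EuclideanSpace ℝ (Fin n)) (hxstarD : xstar ∈ D)
    (hxstar : ∀ y ∈ D,
      (1 / (N : ℝ)) * (∑ i : Fin N, f i (A i xstar)) + φ xstar ≤
        (1 / (N : ℝ)) * (∑ i : Fin N, f i (A i y)) + φ y)
    (v : EuclideanSpace ℝ (Fin n)) (hv : v ∈ D) :
    -(φ v - φ xstar) ≤ ⟪fullGrad md A f' xstar, v - xstar⟫ := by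
  refine le_deriv_of_slope
    (fun t : ℝ => (1 / (N:ℝ)) * ∑ i : Fin N, f i (A i (xstar + t • (v - xstar)))) _ _
    (fullGrad_lineDeriv hN md A f f' hgrad xstar (v - xstar)) ?_
  intro t ht
  have hmem : xstar + t • (v - xstar) = (1 - t) • xstar + t • v := by
    simp [sub_smul, smul_sub]; abel
  have hzD : xstar + t • (v - xstar) ∈ D := by
    rw [hmem]
    exact hφconv.1 hxstarD hv (by linarith [ht.2]) ht.1.le (by ring)
  have hφz : φ (xstar + t • (v - xstar)) ≤ (1 - t) * φ xstar + t * φ v := by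
    rw [hmem]
    exact hφconv.2 hxstarD hv (by linarith [ht.2]) ht.1.le (by ring)
  have hopt := hxstar _ hzD
  have h0 : (1 / (N:ℝ)) * ∑ i : Fin N, f i (A i (xstar + (0:ℝ) • (v - xstar)))
      = (1 / (N:ℝ)) * ∑ i : Fin N, f i (A i xstar) := by
    norm_num
  show -(φ v - φ xstar) ≤
    ((1 / (N:ℝ)) * ∑ i : Fin N, f i (A i (xstar + t • (v - xstar)))
      - (1 / (N:ℝ)) * ∑ i : Fin N, f i (A i (xstar + (0:ℝ) • (v - xstar)))) / t
  rw [h0, le_div_iff₀ ht.1]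
  nlinarith [ht.1]

set_option maxHeartbeats 2000000

/-- **Variance bound for the SVRG estimator (convex composite case).**
For `i = 1,…,N` let `f_i` be convex and `L_i`-smooth, `A_i` linear, let `φ` be proper,
closed, convex (domain `D`, real values `φ` on `D`, closed epigraph),
`f(x) := (1/N)∑ f_i(A_i x)`, `ψ := f + φ`, `L̄ := max_i L_i‖A_i‖²`, and suppose a
minimizer `x*` of `ψ` exists.  Fix `x, x̃ ∈ dom φ`, let `κ(1),…,κ(b)` be i.i.d. indices
uniform on `{1,…,N}` and let `u := ∇f_S(x) − ∇f_S(x̃) + ∇f(x̃)`.  Then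
`E‖u − ∇f(x)‖² ≤ (4L̄/b)(ψ(x) − ψ(x*) + ψ(x̃) − ψ(x*))`. -/
theorem vr_estimator_variance_convex (n N b : ℕ) (hN : 0 < N) (hb : 0 < b)
    (md : Fin N → ℕ)
    (A : ∀ i : Fin N, EuclideanSpace ℝ (Fin n) →L[ℝ] EuclideanSpace ℝ (Fin (md i)))
    (f : ∀ i : Fin N, EuclideanSpace ℝ (Fin (md i)) → ℝ)
    (f' : ∀ i : Fin N, EuclideanSpace ℝ (Fin (md i)) → EuclideanSpace ℝ (Fin (md i)))
    (Li : Fin N → ℝ)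
    (hgrad : ∀ i y, HasGradientAt (f i) (f' i y) y)
    (hLip : ∀ i y z, ‖f' i y - f' i z‖ ≤ Li i * ‖y - z‖)
    (hconv : ∀ i, ConvexOn ℝ Set.univ (f i))
    (D : Set (EuclideanSpace ℝ (Fin n))) (φ : EuclideanSpace ℝ (Fin n) → ℝ)
    (hD : D.Nonempty) (hφconv : ConvexOn ℝ D φ)
    (hφclosed : IsClosed {q : EuclideanSpace ℝ (Fin n) × ℝ | q.1 ∈ D ∧ φ q.1 ≤ q.2})
    (xstar : EuclideanSpace ℝ (Fin n)) (hxstarD : xstar ∈ D)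
    (hxstar : ∀ y ∈ D,
      (1 / (N : ℝ)) * (∑ i : Fin N, f i (A i xstar)) + φ xstar ≤
        (1 / (N : ℝ)) * (∑ i : Fin N, f i (A i y)) + φ y)
    (x xt : EuclideanSpace ℝ (Fin n)) (hx : x ∈ D) (hxt : xt ∈ D) :
    uniformExp (fun ω : Fin b → Fin N =>
        ‖vrEstimator md A f' x xt ω - fullGrad md A f' x‖ ^ 2) ≤
      (4 * (⨆ j : Fin N, Li j * ‖A j‖ ^ 2) / (b : ℝ)) *
        (((1 / (N : ℝ)) * (∑ i : Fin N, f i (A i x)) + φ x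
            - ((1 / (N : ℝ)) * (∑ i : Fin N, f i (A i xstar)) + φ xstar))
          + ((1 / (N : ℝ)) * (∑ i : Fin N, f i (A i xt)) + φ xt
            - ((1 / (N : ℝ)) * (∑ i : Fin N, f i (A i xstar)) + φ xstar))) := by
    classical
  have hNR : (0:ℝ) < N := by exact_mod_cast hN
  have hbR : (0:ℝ) < b := by exact_mod_cast hb
  haveI hNE : Nonempty (Fin N) := ⟨⟨0, hN⟩⟩
  set Lbar : ℝ := ⨆ j : Fin N, Li j * ‖A j‖ ^ 2 with hLbardef
  set Gx : ℝ := (1 / (N : ℝ)) * (∑ i : Fin N, f i (A i x)) + φ x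
      - ((1 / (N : ℝ)) * (∑ i : Fin N, f i (A i xstar)) + φ xstar) with hGxdef
  set Gt : ℝ := (1 / (N : ℝ)) * (∑ i : Fin N, f i (A i xt)) + φ xt
      - ((1 / (N : ℝ)) * (∑ i : Fin N, f i (A i xstar)) + φ xstar) with hGtdef
  have hbdd : BddAbove (Set.range fun j : Fin N => Li j * ‖A j‖ ^ 2) :=
    (Set.finite_range _).bddAbove
  have hLe : ∀ j, Li j * ‖A j‖ ^ 2 ≤ Lbar := fun j => le_ciSup hbdd j
  have htermnn : ∀ j : Fin N, (0:ℝ) ≤ Li j * ‖A j‖ ^ 2 := by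
    intro j
    rcases eq_or_ne (A j) 0 with h | h
    · simp [h]
    · have hex : ∃ u, A j u ≠ 0 := by
        by_contra hno
        push_neg at hno
        exact h (ContinuousLinearMap.ext fun u => by simpa using hno u)
      obtain ⟨u, hu⟩ := hex
      have h1 := hLip j (A j u) 0
      have h2 : 0 < ‖A j u - (0 : EuclideanSpace ℝ (Fin (md j)))‖ := by
        rw [sub_zero, norm_pos_iff]; exact hu
      have hLi : 0 ≤ Li j := by nlinarith [norm_nonneg (f' j (A j u) - f' j 0)]
      positivity
  have hLbar0 : 0 ≤ Lbar := le_trans (htermnn ⟨0, hN⟩) (hLe ⟨0, hN⟩)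
  -- gap bound
  have hGap : ∀ v ∈ D, (1/(N:ℝ)) * ∑ i : Fin N,
      ‖(A i).adjoint (f' i (A i v) - f' i (A i xstar))‖ ^ 2
      ≤ 2 * Lbar * ((1 / (N : ℝ)) * (∑ i : Fin N, f i (A i v)) + φ v
          - ((1 / (N : ℝ)) * (∑ i : Fin N, f i (A i xstar)) + φ xstar)) := by
    intro v hvD
    have hterm : ∀ i : Fin N, ‖(A i).adjoint (f' i (A i v) - f' i (A i xstar))‖ ^ 2
        ≤ 2 * Lbar * (f i (A i v) - f i (A i xstar)
            - ⟪f' i (A i xstar), A i v - A i xstar⟫) := by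
      intro i
      have hfo := first_order_aux (f i) (f' i) (hgrad i) (hconv i) (A i xstar) (A i v)
      have hgapnn : 0 ≤ f i (A i v) - f i (A i xstar)
          - ⟪f' i (A i xstar), A i v - A i xstar⟫ := by linarith
      have hco := cocoercive_aux (f i) (f' i) (Li i) (hgrad i) (hLip i) (hconv i)
        (A i v) (A i xstar)
      have hadj : ‖(A i).adjoint (f' i (A i v) - f' i (A i xstar))‖
          ≤ ‖A i‖ * ‖f' i (A i v) - f' i (A i xstar)‖ := by
        have h1 := ((A i).adjoint).le_opNorm (f' i (A i v) - f' i (A i xstar))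
        have h2 : ‖(A i).adjoint‖ = ‖A i‖ :=
          LinearIsometryEquiv.norm_map ContinuousLinearMap.adjoint (A i)
        rw [h2] at h1
        exact h1
      calc ‖(A i).adjoint (f' i (A i v) - f' i (A i xstar))‖ ^ 2
          ≤ ‖A i‖ ^ 2 * ‖f' i (A i v) - f' i (A i xstar)‖ ^ 2 := by
            nlinarith [norm_nonneg ((A i).adjoint (f' i (A i v) - f' i (A i xstar))),
              norm_nonneg (f' i (A i v) - f' i (A i xstar)), norm_nonneg (A i)]
        _ ≤ ‖A i‖ ^ 2 * (2 * Li i * (f i (A i v) - f i (A i xstar)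
              - ⟪f' i (A i xstar), A i v - A i xstar⟫)) :=
            mul_le_mul_of_nonneg_left hco (by positivity)
        _ = 2 * (Li i * ‖A i‖ ^ 2) * (f i (A i v) - f i (A i xstar)
              - ⟪f' i (A i xstar), A i v - A i xstar⟫) := by ring
        _ ≤ 2 * Lbar * (f i (A i v) - f i (A i xstar)
              - ⟪f' i (A i xstar), A i v - A i xstar⟫) := by
            nlinarith [mul_le_mul_of_nonneg_right (hLe i) hgapnn]
    have hsum := Finset.sum_le_sum (fun i (_ : i ∈ Finset.univ) => hterm i)
    have hs2 := mul_le_mul_of_nonneg_left hsum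
      (by positivity : (0:ℝ) ≤ 1/(N:ℝ))
    have hip : ⟪fullGrad md A f' xstar, v - xstar⟫
        = (1/(N:ℝ)) * ∑ i : Fin N, ⟪f' i (A i xstar), A i v - A i xstar⟫ := by
      rw [fullGrad, real_inner_smul_left, sum_inner]
      congr 1
      refine Finset.sum_congr rfl fun i _ => ?_
      rw [ContinuousLinearMap.adjoint_inner_left, map_sub]
    have hopt := optimality_aux hN md A f f' hgrad D φ hφconv xstar hxstarD hxstar v hvD
    have e1 : (1/(N:ℝ)) * ∑ i : Fin N, 2 * Lbar * (f i (A i v) - f i (A i xstar)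
          - ⟪f' i (A i xstar), A i v - A i xstar⟫)
        = 2 * Lbar * ((1/(N:ℝ)) * ∑ i : Fin N, f i (A i v)
            - (1/(N:ℝ)) * ∑ i : Fin N, f i (A i xstar)
            - ⟪fullGrad md A f' xstar, v - xstar⟫) := by
      rw [← Finset.mul_sum, Finset.sum_sub_distrib, Finset.sum_sub_distrib, hip]
      ring
    rw [e1] at hs2
    have hfin : 2 * Lbar * ((1/(N:ℝ)) * ∑ i : Fin N, f i (A i v)
            - (1/(N:ℝ)) * ∑ i : Fin N, f i (A i xstar)
            - ⟪fullGrad md A f' xstar, v - xstar⟫)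
        ≤ 2 * Lbar * ((1 / (N : ℝ)) * (∑ i : Fin N, f i (A i v)) + φ v
          - ((1 / (N : ℝ)) * (∑ i : Fin N, f i (A i xstar)) + φ xstar)) := by
      have hle : (1/(N:ℝ)) * ∑ i : Fin N, f i (A i v)
            - (1/(N:ℝ)) * ∑ i : Fin N, f i (A i xstar)
            - ⟪fullGrad md A f' xstar, v - xstar⟫
          ≤ (1 / (N : ℝ)) * (∑ i : Fin N, f i (A i v)) + φ v
            - ((1 / (N : ℝ)) * (∑ i : Fin N, f i (A i xstar)) + φ xstar) := by
        linarith
      exact mul_le_mul_of_nonneg_left hle (by linarith)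
    exact le_trans hs2 hfin
  -- estimator quantities
  set ξ : Fin N → EuclideanSpace ℝ (Fin n) :=
    fun i => (A i).adjoint (f' i (A i x) - f' i (A i xt)) with hxidef
  set μ : EuclideanSpace ℝ (Fin n) :=
    fullGrad md A f' x - fullGrad md A f' xt with hmudef
  have hμ : (1/(N:ℝ)) • ∑ i : Fin N, ξ i = μ := by
    rw [hmudef, fullGrad, fullGrad, ← smul_sub, ← Finset.sum_sub_distrib]
    congr 1
    refine Finset.sum_congr rfl fun i _ => ?_
    simp only [hxidef]
    exact map_sub (ContinuousLinearMap.adjoint (A i)) _ _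
  have hsumξ : ∑ i : Fin N, ξ i = (N:ℝ) • μ := by
    rw [← hμ, smul_smul, mul_one_div, div_self (ne_of_gt hNR), one_smul]
  set c : Fin N → EuclideanSpace ℝ (Fin n) := fun i => ξ i - μ with hcdef
  have hc : ∑ i : Fin N, c i = 0 := by
    simp only [hcdef]
    rw [Finset.sum_sub_distrib, hsumξ, Finset.sum_const, Finset.card_univ,
      Fintype.card_fin, ← Nat.cast_smul_eq_nsmul ℝ, sub_self]
  have hdiff : ∀ ω : Fin b → Fin N,
      vrEstimator md A f' x xt ω - fullGrad md A f' x
        = (1/(b:ℝ)) • ∑ j : Fin b, c (ω j) := by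
    intro ω
    have hsc : ∑ j : Fin b, c (ω j) = (∑ j : Fin b, ξ (ω j)) - (b:ℝ) • μ := by
      simp only [hcdef]
      rw [Finset.sum_sub_distrib, Finset.sum_const, Finset.card_univ,
        Fintype.card_fin, ← Nat.cast_smul_eq_nsmul ℝ]
    have hcancel : (1/(b:ℝ)) * (b:ℝ) = 1 := by field_simp
    rw [hsc, smul_sub, smul_smul, hcancel, one_smul, vrEstimator]
    have hsx : (∑ j : Fin b, (A (ω j)).adjoint
          (f' (ω j) (A (ω j) x) - f' (ω j) (A (ω j) xt)))
        = ∑ j : Fin b, ξ (ω j) := rfl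
    rw [hsx, hmudef]
    abel
  -- expectation
  have hexp : uniformExp (fun ω : Fin b → Fin N =>
      ‖vrEstimator md A f' x xt ω - fullGrad md A f' x‖ ^ 2)
      = (1/((b:ℝ)*(N:ℝ))) * ∑ i : Fin N, ‖c i‖ ^ 2 := by
    rw [uniformExp]
    have h1 : ∀ ω : Fin b → Fin N,
        ‖vrEstimator md A f' x xt ω - fullGrad md A f' x‖ ^ 2
        = (1/(b:ℝ))^2 * ‖∑ j : Fin b, c (ω j)‖ ^ 2 := by
      intro ω
      rw [hdiff ω, norm_smul, mul_pow, Real.norm_eq_abs,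
        abs_of_pos (by positivity : (0:ℝ) < 1/(b:ℝ))]
    simp only [h1]
    rw [← Finset.mul_sum, smul_eq_mul]
    have hkey := sum_tuple_norm_sq c hc b
    set S : ℝ := ∑ ω : Fin b → Fin N, ‖∑ j : Fin b, c (ω j)‖ ^ 2 with hSdef
    set V : ℝ := ∑ i : Fin N, ‖c i‖ ^ 2 with hVdef
    have hNb : (0:ℝ) < (N:ℝ)^b := by positivity
    have hSval : S = (b:ℝ) * (N:ℝ)^b * V / (N:ℝ) := by
      field_simp
      linarith [hkey]
    rw [hSval]
    field_simp
  -- variance reduction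
  have hvar : ∑ i : Fin N, ‖c i‖ ^ 2 ≤ ∑ i : Fin N, ‖ξ i‖ ^ 2 := by
    have h1 : ∀ i : Fin N, ‖c i‖ ^ 2 = ‖ξ i‖ ^ 2 - 2 * ⟪ξ i, μ⟫ + ‖μ‖ ^ 2 := by
      intro i
      simp only [hcdef]
      exact norm_sub_sq_real _ _
    have h2 : ∑ i : Fin N, ⟪ξ i, μ⟫ = (N:ℝ) * ‖μ‖ ^ 2 := by
      rw [← sum_inner, hsumξ, real_inner_smul_left, real_inner_self_eq_norm_sq]
    calc ∑ i : Fin N, ‖c i‖ ^ 2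
        = ∑ i : Fin N, (‖ξ i‖ ^ 2 - 2 * ⟪ξ i, μ⟫ + ‖μ‖ ^ 2) :=
          Finset.sum_congr rfl (fun i _ => h1 i)
      _ = (∑ i : Fin N, ‖ξ i‖ ^ 2) - 2 * ((N:ℝ) * ‖μ‖ ^ 2) + (N:ℝ) * ‖μ‖ ^ 2 := by
          rw [Finset.sum_add_distrib, Finset.sum_sub_distrib, ← Finset.mul_sum, h2,
            Finset.sum_const, Finset.card_univ, Fintype.card_fin, nsmul_eq_mul]
      _ ≤ ∑ i : Fin N, ‖ξ i‖ ^ 2 := by nlinarith [sq_nonneg ‖μ‖, hNR]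
  -- per-index split
  have hsplit : ∀ i : Fin N, ‖ξ i‖ ^ 2
      ≤ 2 * ‖(A i).adjoint (f' i (A i x) - f' i (A i xstar))‖ ^ 2
        + 2 * ‖(A i).adjoint (f' i (A i xt) - f' i (A i xstar))‖ ^ 2 := by
    intro i
    have he : ξ i = (A i).adjoint (f' i (A i x) - f' i (A i xstar))
        - (A i).adjoint (f' i (A i xt) - f' i (A i xstar)) := by
      simp only [hxidef]
      rw [← map_sub]
      congr 1
      abel
    rw [he]
    have hexpand := norm_sub_sq_real ((A i).adjoint (f' i (A i x) - f' i (A i xstar)))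
      ((A i).adjoint (f' i (A i xt) - f' i (A i xstar)))
    nlinarith [hexpand,
      neg_abs_le (⟪(A i).adjoint (f' i (A i x) - f' i (A i xstar)),
        (A i).adjoint (f' i (A i xt) - f' i (A i xstar))⟫),
      abs_real_inner_le_norm ((A i).adjoint (f' i (A i x) - f' i (A i xstar)))
        ((A i).adjoint (f' i (A i xt) - f' i (A i xstar))),
      sq_nonneg (‖(A i).adjoint (f' i (A i x) - f' i (A i xstar))‖
        - ‖(A i).adjoint (f' i (A i xt) - f' i (A i xstar))‖)]
  -- final chain
  rw [hexp]
  set Sx : ℝ := ∑ i : Fin N,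
    ‖(A i).adjoint (f' i (A i x) - f' i (A i xstar))‖ ^ 2 with hSxdef
  set St : ℝ := ∑ i : Fin N,
    ‖(A i).adjoint (f' i (A i xt) - f' i (A i xstar))‖ ^ 2 with hStdef
  have hGxb : (1/(N:ℝ)) * Sx ≤ 2 * Lbar * Gx := hGap x hx
  have hGtb : (1/(N:ℝ)) * St ≤ 2 * Lbar * Gt := hGap xt hxt
  have hΞ : ∑ i : Fin N, ‖ξ i‖ ^ 2 ≤ 2 * Sx + 2 * St := by
    have := Finset.sum_le_sum (fun i (_ : i ∈ Finset.univ) => hsplit i)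
    calc ∑ i : Fin N, ‖ξ i‖ ^ 2
        ≤ ∑ i : Fin N, (2 * ‖(A i).adjoint (f' i (A i x) - f' i (A i xstar))‖ ^ 2
            + 2 * ‖(A i).adjoint (f' i (A i xt) - f' i (A i xstar))‖ ^ 2) := this
      _ = 2 * Sx + 2 * St := by
          rw [Finset.sum_add_distrib, ← Finset.mul_sum, ← Finset.mul_sum]
  have step1 : (1/((b:ℝ)*(N:ℝ))) * ∑ i : Fin N, ‖c i‖ ^ 2
      ≤ (1/((b:ℝ)*(N:ℝ))) * (2 * Sx + 2 * St) :=
    mul_le_mul_of_nonneg_left (le_trans hvar hΞ) (by positivity)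
  have e1 : (1/((b:ℝ)*(N:ℝ))) * (2 * Sx + 2 * St)
      = (2/(b:ℝ)) * ((1/(N:ℝ)) * Sx) + (2/(b:ℝ)) * ((1/(N:ℝ)) * St) := by
    field_simp
    try ring
  have step2 : (2/(b:ℝ)) * ((1/(N:ℝ)) * Sx) + (2/(b:ℝ)) * ((1/(N:ℝ)) * St)
      ≤ (2/(b:ℝ)) * (2 * Lbar * Gx) + (2/(b:ℝ)) * (2 * Lbar * Gt) :=
    add_le_add (mul_le_mul_of_nonneg_left hGxb (by positivity))
      (mul_le_mul_of_nonneg_left hGtb (by positivity))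
  have e2 : (2/(b:ℝ)) * (2 * Lbar * Gx) + (2/(b:ℝ)) * (2 * Lbar * Gt)
      = (4 * Lbar / (b:ℝ)) * (Gx + Gt) := by
    field_simp
    ring
  linarith
end

section
/- Fix ν > 0 and b ∈ ℝ and let f(x) := ln(1 + (x − b)²/ν) for x ∈ ℝ. Then f is twice continuously differentiable with f''(x) = 2(ν − (x − b)²)/(ν + (x − b)²)², the infimum of f'' over ℝ equals −1/(4ν) and is attained exactly at x ∈ {b + √(3ν), b − √(3ν)}, and consequently f is (1/(4ν))-weakly convex, i.e., the function x ↦ f(x) + x²/(8ν) is convex on ℝ. -/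
/-- **Student-t loss is weakly convex.**
Fix `ν > 0` and `b ∈ ℝ` and let `f x := log (1 + (x − b)²/ν)`.  Then `f` is twice
continuously differentiable with `f'' x = 2(ν − (x − b)²)/(ν + (x − b)²)²`, the infimum of
`f''` over `ℝ` equals `−1/(4ν)` and is attained exactly at `x ∈ {b + √(3ν), b − √(3ν)}`,
and consequently `f` is `(1/(4ν))`-weakly convex, i.e. `x ↦ f x + x²/(8ν)` is convex on `ℝ`. -/
theorem student_t_loss_weakly_convex (ν b : ℝ) (hν : 0 < ν)
    (f : ℝ → ℝ) (hf : ∀ x, f x = Real.log (1 + (x - b) ^ 2 / ν)) :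
    ContDiff ℝ 2 f ∧
    (∀ x, deriv (deriv f) x = 2 * (ν - (x - b) ^ 2) / (ν + (x - b) ^ 2) ^ 2) ∧
    IsGLB (Set.range fun x => deriv (deriv f) x) (-(1 / (4 * ν))) ∧
    (∀ x, deriv (deriv f) x = -(1 / (4 * ν)) ↔
      (x = b + Real.sqrt (3 * ν) ∨ x = b - Real.sqrt (3 * ν))) ∧
    ConvexOn ℝ Set.univ (fun x => f x + x ^ 2 / (8 * ν)) := by
  have hfe : f = fun x => Real.log (1 + (x - b) ^ 2 / ν) := funext hf
  have hd : ∀ x : ℝ, 0 < ν + (x - b) ^ 2 := fun x => by positivity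
  have hu : ∀ x : ℝ, 0 < 1 + (x - b) ^ 2 / ν := fun x => by positivity
  -- first derivative
  have h1 : ∀ x : ℝ, HasDerivAt f (2 * (x - b) / (ν + (x - b) ^ 2)) x := by
    intro x
    have hu' : HasDerivAt (fun x : ℝ => 1 + (x - b) ^ 2 / ν) (2 * (x - b) / ν) x := by
      have : HasDerivAt (fun x : ℝ => x - b) 1 x := (hasDerivAt_id x).sub_const b
      simpa [mul_comm] using (((this.pow 2).div_const ν).const_add 1)
    have := hu'.log (ne_of_gt (hu x))
    rw [hfe]
    convert this using 1
    field_simp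
  have hderiv1 : deriv f = fun x => 2 * (x - b) / (ν + (x - b) ^ 2) :=
    funext fun x => (h1 x).deriv
  -- second derivative of the explicit first derivative
  have h2' : ∀ x : ℝ, HasDerivAt (fun x : ℝ => 2 * (x - b) / (ν + (x - b) ^ 2))
      (2 * (ν - (x - b) ^ 2) / (ν + (x - b) ^ 2) ^ 2) x := by
    intro x
    have hx : HasDerivAt (fun x : ℝ => x - b) 1 x := (hasDerivAt_id x).sub_const b
    have hn : HasDerivAt (fun x : ℝ => 2 * (x - b)) 2 x := by
      simpa using hx.const_mul 2
    have hdd : HasDerivAt (fun x : ℝ => ν + (x - b) ^ 2) (2 * (x - b)) x := by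
      simpa [mul_comm] using (hx.pow 2).const_add ν
    have := hn.div hdd (ne_of_gt (hd x))
    refine this.congr_deriv ?_
    field_simp
    ring
  have h2 : ∀ x : ℝ, HasDerivAt (deriv f)
      (2 * (ν - (x - b) ^ 2) / (ν + (x - b) ^ 2) ^ 2) x := by
    intro x; rw [hderiv1]; exact h2' x
  have hderiv2 : ∀ x, deriv (deriv f) x = 2 * (ν - (x - b) ^ 2) / (ν + (x - b) ^ 2) ^ 2 :=
    fun x => (h2 x).deriv
  -- lower bound
  have hlb' : ∀ x : ℝ, -(1 / (4 * ν)) ≤ 2 * (ν - (x - b) ^ 2) / (ν + (x - b) ^ 2) ^ 2 := by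
    intro x
    rw [show -(1 / (4 * ν)) = (-1) / (4 * ν) by ring,
      div_le_div_iff₀ (by positivity) (by positivity)]
    nlinarith [sq_nonneg ((x - b) ^ 2 - 3 * ν), hd x, sq_nonneg (x - b)]
  have hlb : ∀ x : ℝ, -(1 / (4 * ν)) ≤ deriv (deriv f) x := fun x =>
    (hderiv2 x) ▸ hlb' x
  -- value at the minimizers
  have hsq : Real.sqrt (3 * ν) ^ 2 = 3 * ν := Real.sq_sqrt (by positivity)
  have hval : deriv (deriv f) (b + Real.sqrt (3 * ν)) = -(1 / (4 * ν)) := by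
    rw [hderiv2, show b + Real.sqrt (3 * ν) - b = Real.sqrt (3 * ν) by ring, hsq]
    field_simp
    ring
  have hval2 : deriv (deriv f) (b - Real.sqrt (3 * ν)) = -(1 / (4 * ν)) := by
    rw [hderiv2, show b - Real.sqrt (3 * ν) - b = -Real.sqrt (3 * ν) by ring, neg_pow, hsq]
    field_simp
    ring
  -- equality characterization
  have hiff : ∀ x, deriv (deriv f) x = -(1 / (4 * ν)) ↔
      (x = b + Real.sqrt (3 * ν) ∨ x = b - Real.sqrt (3 * ν)) := by
    intro x
    constructor
    · intro h
      rw [hderiv2 x] at h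
      have hd' := hd x
      have hh : ((x - b) ^ 2 - 3 * ν) ^ 2 = 0 := by
        field_simp at h
        nlinarith [h]
      have h3 : (x - b) ^ 2 = 3 * ν := by nlinarith [hh]
      have : |x - b| = Real.sqrt (3 * ν) := by
        rw [← Real.sqrt_sq_eq_abs, h3]
      rcases (abs_eq (Real.sqrt_nonneg (3 * ν))).mp this with h' | h'
      · left; linarith
      · right; linarith
    · rintro (h | h) <;> subst h
      · exact hval
      · exact hval2
  -- ContDiff
  have hcd : ContDiff ℝ 2 f := by
    rw [hfe]
    exact ((contDiff_const.add (((contDiff_id.sub contDiff_const).pow 2).div_const ν)).log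
      (fun x => ne_of_gt (hu x)))
  refine ⟨hcd, hderiv2, ?_, hiff, ?_⟩
  · exact IsLeast.isGLB ⟨⟨b + Real.sqrt (3 * ν), hval⟩,
      fun y ⟨x, hx⟩ => hx ▸ hlb x⟩
  · -- convexity
    set F : ℝ → ℝ := fun x => f x + x ^ 2 / (8 * ν) with hF
    have hq : ∀ x : ℝ, HasDerivAt (fun x : ℝ => x ^ 2 / (8 * ν)) (x / (4 * ν)) x := by
      intro x
      have := ((hasDerivAt_id x).pow 2).div_const (8 * ν)
      refine this.congr_deriv ?_
      simp only [id_eq]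
      field_simp
      ring
    have hF1 : ∀ x, HasDerivAt F (2 * (x - b) / (ν + (x - b) ^ 2) + x / (4 * ν)) x :=
      fun x => (h1 x).add (hq x)
    have hdF1 : deriv F = fun x => 2 * (x - b) / (ν + (x - b) ^ 2) + x / (4 * ν) :=
      funext fun x => (hF1 x).deriv
    have hF2 : ∀ x, HasDerivAt (deriv F)
        (2 * (ν - (x - b) ^ 2) / (ν + (x - b) ^ 2) ^ 2 + 1 / (4 * ν)) x := by
      intro x
      rw [hdF1]
      exact (h2' x).add (by simpa using (hasDerivAt_id x).div_const (4 * ν))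
    apply convexOn_univ_of_deriv2_nonneg (fun x => (hF1 x).differentiableAt)
      (fun x => (hF2 x).differentiableAt)
    intro x
    have : deriv^[2] F x = deriv (deriv F) x := rfl
    rw [this, (hF2 x).deriv]
    have := hlb' x
    linarith
end
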